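/- arXiv:1601.07579 — 3 statements merged into one kernel-verified Lean document; each statement's English description precedes it below -/
import Mathlib

section
/- Let $g, h \in L^2(\mathbb{R}^d)$ be real-valued band-limited functions with $\mathrm{supp}\,\hat{g}, \mathrm{supp}\,\hat{h} \subseteq [-1/2,1/2]^d$, and let $X = D[2\mathbf{s}]^{-1}\mathbb{Z}^d$ where $D[\mathbf{s}] = \mathrm{diag}(s_1,\dots,s_d)$ with all $s_j \geq 1$. If $|g(x)| = |h(x)|$ for all $x \in X$, then $g = h$ or $g = -h$. -/
open MeasureTheory Real Filter
open scoped FourierTransform ENNReal Topology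

noncomputable section

abbrev Ed (d : ℕ) := EuclideanSpace ℝ (Fin d)

def latticePt (d : ℕ) (s : Fin d → ℝ) (n : Fin d → ℤ) : Ed d :=
  (WithLp.equiv 2 (Fin d → ℝ)).symm fun j => (n j : ℝ) / (2 * s j)

def latticePtM (d : ℕ) (M : Matrix (Fin d) (Fin d) ℝ) (s : Fin d → ℝ) (n : Fin d → ℤ) : Ed d :=
  (WithLp.equiv 2 (Fin d → ℝ)).symm ((M.transpose)⁻¹.mulVec fun j => (n j : ℝ) / (2 * s j))

open scoped RealInnerProductSpace Convolution ComplexConjugate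

namespace PR

/-- `exp(i r)` for real `r`. -/
abbrev eC (r : ℝ) : ℂ := Complex.exp ((r : ℂ) * Complex.I)

lemma norm_eC (r : ℝ) : ‖eC r‖ = 1 := by
  rw [Complex.norm_exp]
  simp

lemma eC_add (r r' : ℝ) : eC (r + r') = eC r * eC r' := by
  show Complex.exp _ = _
  rw [← Complex.exp_add, Complex.ofReal_add, add_mul]

variable {d : ℕ}

/-- Explicit inverse Fourier integral. -/
def EI (f : Ed d → ℂ) (x : Ed d) : ℂ := ∫ ξ, f ξ * eC (2 * π * ⟪ξ, x⟫)

lemma EI_eq (f : Ed d → ℂ) (x : Ed d) : 𝓕⁻ f x = EI f x := by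
  rw [Real.fourierInv_eq']
  unfold EI
  congr 1 with ξ
  rw [smul_eq_mul, mul_comm]

lemma integrable_mul_eC {f : Ed d → ℂ} (hf : Integrable f) {c : Ed d → ℝ}
    (hc : Continuous c) : Integrable (fun ξ => f ξ * eC (c ξ)) := by
  have := hf.bdd_mul (f := fun ξ => eC (c ξ))
    (c := 1)
    (Continuous.aestronglyMeasurable (by fun_prop)) (Eventually.of_forall fun ξ => le_of_eq (norm_eC _))
  simpa [mul_comm] using this

lemma contInner (x : Ed d) : Continuous (fun ξ : Ed d => ⟪ξ, x⟫) :=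
  continuous_id.inner continuous_const

lemma integrable_EI_integrand {f : Ed d → ℂ} (hf : Integrable f) (x : Ed d) :
    Integrable (fun ξ => f ξ * eC (2 * π * ⟪ξ, x⟫)) :=
  integrable_mul_eC hf (continuous_const.mul (contInner x))

lemma EI_sub {f f' : Ed d → ℂ} (hf : Integrable f) (hf' : Integrable f') (x : Ed d) :
    EI (fun ξ => f ξ - f' ξ) x = EI f x - EI f' x := by
  unfold EI
  simp_rw [sub_mul]
  exact integral_sub (integrable_EI_integrand hf x) (integrable_EI_integrand hf' x)

lemma EI_add {f f' : Ed d → ℂ} (hf : Integrable f) (hf' : Integrable f') (x : Ed d) :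
    EI (fun ξ => f ξ + f' ξ) x = EI f x + EI f' x := by
  unfold EI
  simp_rw [add_mul]
  exact integral_add (integrable_EI_integrand hf x) (integrable_EI_integrand hf' x)

/-- Multiplication formula: inverse Fourier integral of a convolution. -/
lemma EI_conv {W₁ W₂ : Ed d → ℂ} (h₁ : Integrable W₁) (h₂ : Integrable W₂) (x : Ed d) :
    EI (W₁ ⋆[ContinuousLinearMap.mul ℂ ℂ] W₂) x = EI W₁ x * EI W₂ x := by
  have hP : Integrable (fun p : Ed d × Ed d =>
      W₁ p.2 * W₂ (p.1 - p.2) * eC (2 * π * ⟪p.1, x⟫)) (volume.prod volume) := by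
    have hconv := h₁.convolution_integrand (ContinuousLinearMap.mul ℂ ℂ) h₂
    have := hconv.bdd_mul (c := 1) (f := fun p : Ed d × Ed d => eC (2 * π * ⟪p.1, x⟫))
      (Continuous.aestronglyMeasurable (by
        have : Continuous (fun p : Ed d × Ed d => ⟪p.1, x⟫) := by
          exact (contInner x).comp continuous_fst
        fun_prop)) (Eventually.of_forall fun p => le_of_eq (norm_eC _))
    simpa [mul_comm, ContinuousLinearMap.mul_apply'] using this
  unfold EI
  calc ∫ ξ, (W₁ ⋆[ContinuousLinearMap.mul ℂ ℂ] W₂) ξ * eC (2 * π * ⟪ξ, x⟫)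
      = ∫ ξ, ∫ t, W₁ t * W₂ (ξ - t) * eC (2 * π * ⟪ξ, x⟫) := by
        congr 1 with ξ
        rw [convolution, ← integral_mul_const]
        simp [ContinuousLinearMap.mul_apply']
    _ = ∫ t, ∫ ξ, W₁ t * W₂ (ξ - t) * eC (2 * π * ⟪ξ, x⟫) := by
        exact integral_integral_swap hP
    _ = ∫ t, W₁ t * eC (2 * π * ⟪t, x⟫) * ∫ u, W₂ u * eC (2 * π * ⟪u, x⟫) := by
        congr 1 with t
        rw [← integral_add_right_eq_self
          (fun ξ => W₁ t * W₂ (ξ - t) * eC (2 * π * ⟪ξ, x⟫)) t]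
        simp only [add_sub_cancel_right]
        rw [← integral_const_mul]
        congr 1 with u
        have : (2 : ℝ) * π * ⟪u + t, x⟫ = 2 * π * ⟪u, x⟫ + 2 * π * ⟪t, x⟫ := by
          rw [inner_add_left]; ring
        rw [this, eC_add]
        ring
    _ = (∫ t, W₁ t * eC (2 * π * ⟪t, x⟫)) * ∫ u, W₂ u * eC (2 * π * ⟪u, x⟫) := by
        rw [← integral_mul_const]

/-- Support of convolution of half-cube supported functions. -/
lemma conv_support {W₁ W₂ : Ed d → ℂ}
    (h₁ : ∀ ξ : Ed d, (∃ j, (1:ℝ)/2 < |ξ j|) → W₁ ξ = 0)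
    (h₂ : ∀ ξ : Ed d, (∃ j, (1:ℝ)/2 < |ξ j|) → W₂ ξ = 0)
    (ξ : Ed d) (hξ : ∃ j, 1 < |ξ j|) :
    (W₁ ⋆[ContinuousLinearMap.mul ℂ ℂ] W₂) ξ = 0 := by
  rw [convolution]
  have : ∀ t : Ed d, (ContinuousLinearMap.mul ℂ ℂ) (W₁ t) (W₂ (ξ - t)) = 0 := by
    intro t
    obtain ⟨j, hj⟩ := hξ
    rcases le_or_gt |t j| (1/2) with ht | ht
    · have : (1:ℝ)/2 < |ξ j - t j| := by
        have := abs_sub_abs_le_abs_sub (ξ j) (t j)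
        linarith
      have h0 : W₂ (ξ - t) = 0 := h₂ _ ⟨j, by simpa using this⟩
      simp [h0]
    · have h0 : W₁ t = 0 := h₁ _ ⟨j, ht⟩
      simp [h0]
  simp only [this, integral_zero]


/-- Restriction of the band-limited extension to a complex line. -/
def lineF (W : Ed d → ℂ) (x₀ w : Ed d) (z : ℂ) : ℂ :=
  ∫ ξ, W ξ * Complex.exp (((2 * π * ⟪ξ, x₀⟫ : ℝ) : ℂ) * Complex.I
      + z * (((2 * π * ⟪ξ, w⟫ : ℝ) : ℂ) * Complex.I))

lemma lineF_real (W : Ed d → ℂ) (x₀ w : Ed d) (t : ℝ) :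
    lineF W x₀ w t = EI W (x₀ + t • w) := by
  unfold lineF EI
  congr 1 with ξ
  congr 2
  have : ⟪ξ, x₀ + t • w⟫ = ⟪ξ, x₀⟫ + t * ⟪ξ, w⟫ := by
    rw [inner_add_right, real_inner_smul_right]
  rw [this]
  push_cast
  ring

lemma norm_exp_line (a b : ℝ) (z : ℂ) :
    ‖Complex.exp (((a : ℂ)) * Complex.I + z * (((b : ℂ)) * Complex.I))‖ ≤ Real.exp (‖z‖ * |b|) := by
  rw [Complex.norm_exp]
  apply Real.exp_le_exp.2
  have : ((a : ℂ) * Complex.I + z * ((b : ℂ) * Complex.I)).re = -(z.im * b) := by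
    simp [Complex.add_re, Complex.mul_re]
  rw [this]
  calc -(z.im * b) ≤ |z.im * b| := neg_le_abs _
    _ = |z.im| * |b| := abs_mul _ _
    _ ≤ ‖z‖ * |b| := by
        refine mul_le_mul_of_nonneg_right ?_ (abs_nonneg b)
        exact Complex.abs_im_le_norm z

lemma lineF_differentiable {W : Ed d → ℂ} (hW : Integrable W) (x₀ w : Ed d)
    {C : ℝ} (hC0 : 0 ≤ C) (hC : ∀ ξ, W ξ ≠ 0 → |⟪ξ, w⟫| ≤ C) :
    Differentiable ℂ (lineF W x₀ w) := by
  intro z₀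
  set c₁ : Ed d → ℂ := fun ξ => ((2 * π * ⟪ξ, x₀⟫ : ℝ) : ℂ) * Complex.I with hc₁
  set c₂ : Ed d → ℂ := fun ξ => ((2 * π * ⟪ξ, w⟫ : ℝ) : ℂ) * Complex.I with hc₂
  have hbnd : ∀ (z : ℂ) (ξ : Ed d), ‖z - z₀‖ < 1 →
      ‖W ξ * Complex.exp (c₁ ξ + z * c₂ ξ)‖ ≤ ‖W ξ‖ * Real.exp ((‖z₀‖ + 1) * (2 * π * C)) := by
    intro z ξ hz
    rcases eq_or_ne (W ξ) 0 with h0 | h0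
    · simp [h0, Real.exp_nonneg]
    · rw [norm_mul]
      refine mul_le_mul_of_nonneg_left ?_ (norm_nonneg _)
      refine le_trans (norm_exp_line _ _ z) (Real.exp_le_exp.2 ?_)
      have h1 : ‖z‖ ≤ ‖z₀‖ + 1 := by
        have := norm_sub_norm_le z z₀
        rw [show z = z₀ + (z - z₀) by ring]
        calc ‖z₀ + (z - z₀)‖ ≤ ‖z₀‖ + ‖z - z₀‖ := norm_add_le _ _
          _ ≤ ‖z₀‖ + 1 := by linarith
      have h2 : |2 * π * ⟪ξ, w⟫| ≤ 2 * π * C := by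
        rw [abs_mul]
        have : |(2:ℝ) * π| = 2 * π := abs_of_nonneg (by positivity)
        rw [this]
        exact mul_le_mul_of_nonneg_left (hC ξ h0) (by positivity)
      exact mul_le_mul h1 h2 (abs_nonneg _) (by positivity)
  have hcont1 : Continuous (fun ξ : Ed d => Complex.exp (c₁ ξ + z₀ * c₂ ξ)) := by
    apply Complex.continuous_exp.comp
    apply Continuous.add
    · exact (Complex.continuous_ofReal.comp (continuous_const.mul (contInner x₀))).mul
        continuous_const
    · exact continuous_const.mul ((Complex.continuous_ofReal.comp
        (continuous_const.mul (contInner w))).mul continuous_const)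
  have hcontc2 : Continuous c₂ :=
    (Complex.continuous_ofReal.comp (continuous_const.mul (contInner w))).mul continuous_const
  have key := hasDerivAt_integral_of_dominated_loc_of_deriv_le (μ := (volume : Measure (Ed d)))
    (F := fun z ξ => W ξ * Complex.exp (c₁ ξ + z * c₂ ξ))
    (F' := fun z ξ => W ξ * (Complex.exp (c₁ ξ + z * c₂ ξ) * c₂ ξ))
    (x₀ := z₀)
    (bound := fun ξ => ‖W ξ‖ * ((2 * π * C) * Real.exp ((‖z₀‖ + 1) * (2 * π * C))))
    (s := Metric.ball z₀ 1) (Metric.ball_mem_nhds z₀ one_pos)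
    (by
      filter_upwards with z
      apply hW.aestronglyMeasurable.mul
      apply Continuous.aestronglyMeasurable
      apply Complex.continuous_exp.comp
      apply Continuous.add
      · exact (Complex.continuous_ofReal.comp (continuous_const.mul (contInner x₀))).mul
          continuous_const
      · exact continuous_const.mul ((Complex.continuous_ofReal.comp
          (continuous_const.mul (contInner w))).mul continuous_const))
    (by
      refine (hW.norm.const_mul (Real.exp ((‖z₀‖ + 1) * (2 * π * C)))).mono'
        (hW.aestronglyMeasurable.mul hcont1.aestronglyMeasurable) ?_
      filter_upwards with ξ
      have := hbnd z₀ ξ (by simp)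
      calc ‖W ξ * Complex.exp (c₁ ξ + z₀ * c₂ ξ)‖
          ≤ ‖W ξ‖ * Real.exp ((‖z₀‖ + 1) * (2 * π * C)) := this
        _ = Real.exp ((‖z₀‖ + 1) * (2 * π * C)) * ‖W ξ‖ := by ring)
    (hW.aestronglyMeasurable.mul (hcont1.mul hcontc2).aestronglyMeasurable)
    (by
      filter_upwards with ξ
      intro z hz
      rw [Metric.mem_ball, dist_eq_norm] at hz
      rcases eq_or_ne (W ξ) 0 with h0 | h0
      · simp only [h0, zero_mul, norm_zero]
        positivity
      · rw [norm_mul, norm_mul]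
        have h2 : ‖c₂ ξ‖ ≤ 2 * π * C := by
          rw [hc₂]
          simp only [norm_mul, Complex.norm_I, mul_one, Complex.norm_real, Real.norm_eq_abs]
          rw [← abs_mul]
          have habs : |(2:ℝ) * π| = 2 * π := abs_of_nonneg (by positivity)
          rw [habs]
          exact mul_le_mul_of_nonneg_left (hC ξ h0) (by positivity)
        have h1 : ‖Complex.exp (c₁ ξ + z * c₂ ξ)‖ ≤ Real.exp ((‖z₀‖ + 1) * (2 * π * C)) := by
          have hb := hbnd z ξ hz
          rw [norm_mul] at hb
          have hWpos : 0 < ‖W ξ‖ := norm_pos_iff.2 h0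
          exact le_of_mul_le_mul_left (by linarith [hb]) hWpos
        calc ‖W ξ‖ * (‖Complex.exp (c₁ ξ + z * c₂ ξ)‖ * ‖c₂ ξ‖)
            ≤ ‖W ξ‖ * (Real.exp ((‖z₀‖ + 1) * (2 * π * C)) * (2 * π * C)) := by
              refine mul_le_mul_of_nonneg_left ?_ (norm_nonneg _)
              exact mul_le_mul h1 h2 (norm_nonneg _) (Real.exp_nonneg _)
          _ = ‖W ξ‖ * (2 * π * C * Real.exp ((‖z₀‖ + 1) * (2 * π * C))) := by ring)
    (((hW.norm.const_mul ((2 * π * C) * Real.exp ((‖z₀‖ + 1) * (2 * π * C))))).congr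
      (by filter_upwards with ξ; ring))
    (by
      filter_upwards with ξ
      intro z hz
      have hd : HasDerivAt (fun z : ℂ => c₁ ξ + z * c₂ ξ) (c₂ ξ) z := by
        simpa using ((hasDerivAt_id z).mul_const (c₂ ξ)).const_add (c₁ ξ)
      exact (hd.cexp).const_mul (W ξ))
  exact key.2.differentiableAt

/-- 1D dichotomy: an entire function nonzero at 0 forces its partner to vanish on ℝ. -/
lemma dichotomy {U V : ℂ → ℂ} (hU : Differentiable ℂ U) (hV : Differentiable ℂ V)
    (h0 : U 0 ≠ 0) (hprod : ∀ t : ℝ, U t * V t = 0) : ∀ t : ℝ, V t = 0 := by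
  intro t₀
  by_contra hVt
  -- V ≠ 0 near t₀ on ℝ, so U vanishes on a real neighborhood of t₀
  have hVc : ContinuousAt V (t₀ : ℂ) := (hV _).continuousAt
  obtain ⟨δ, hδ, hball⟩ := Metric.continuousAt_iff.1 hVc (‖V t₀‖) (norm_pos_iff.2 hVt)
  have hUz : ∀ z : ℂ, dist z (t₀ : ℂ) < δ → (∃ t : ℝ, z = t) → U z = 0 := by
    rintro z hz ⟨t, rfl⟩
    have hVz : V t ≠ 0 := by
      intro h
      have := hball hz
      rw [h] at this
      simp [dist_eq_norm] at this
    exact (mul_eq_zero.1 (hprod t)).resolve_right hVz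
  -- frequently zero near t₀
  have hfreq : ∃ᶠ z in 𝓝[≠] (t₀ : ℂ), U z = 0 := by
    have htend : Tendsto (fun n : ℕ => ((t₀ + 1 / (n + 1) : ℝ) : ℂ)) atTop (𝓝[≠] (t₀ : ℂ)) := by
      apply tendsto_nhdsWithin_of_tendsto_nhds_of_eventually_within
      · have : Tendsto (fun n : ℕ => (t₀ + 1 / (n + 1) : ℝ)) atTop (𝓝 t₀) := by
          have h1 : Tendsto (fun n : ℕ => 1 / ((n : ℝ) + 1)) atTop (𝓝 0) :=
            tendsto_one_div_add_atTop_nhds_zero_nat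
          have := h1.const_add t₀
          simpa using this
        exact (Complex.continuous_ofReal.tendsto t₀).comp this
      · filter_upwards with n
        simp only [Set.mem_compl_iff, Set.mem_singleton_iff]
        intro h
        have : (t₀ + 1 / ((n:ℝ) + 1)) = t₀ := by exact_mod_cast Complex.ofReal_inj.1 h
        have hpos : (0:ℝ) < 1 / ((n:ℝ) + 1) := by positivity
        linarith
    apply htend.frequently
    apply Filter.Eventually.frequently
    have : ∀ᶠ n : ℕ in atTop, (1 : ℝ) / (n + 1) < δ := by
      have h1 : Tendsto (fun n : ℕ => 1 / ((n : ℝ) + 1)) atTop (𝓝 0) :=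
        tendsto_one_div_add_atTop_nhds_zero_nat
      exact h1.eventually_lt_const hδ
    filter_upwards [this] with n hn
    apply hUz _ _ ⟨_, rfl⟩
    rw [dist_eq_norm]
    have : ((t₀ + 1 / ((n:ℝ) + 1) : ℝ) : ℂ) - (t₀ : ℂ) = ((1 / ((n:ℝ) + 1) : ℝ) : ℂ) := by
      push_cast; ring
    rw [this, Complex.norm_real, Real.norm_eq_abs, abs_of_pos (by positivity)]
    exact hn
  have hUanalytic : AnalyticOnNhd ℂ U Set.univ :=
    DifferentiableOn.analyticOnNhd (fun x _ => (hU x).differentiableWithinAt) isOpen_univ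
  have := hUanalytic.eqOn_zero_of_preconnected_of_frequently_eq_zero
    isPreconnected_univ (Set.mem_univ (t₀ : ℂ)) hfreq
  exact h0 (this (Set.mem_univ 0))

/-- Bound for the inner product over the half-cube. -/
lemma inner_bound {ξ : Ed d} (hξ : ∀ j, |ξ j| ≤ 1/2) (w : Ed d) :
    |⟪ξ, w⟫| ≤ (1/2) * ∑ j, |w j| := by
  have : ⟪ξ, w⟫ = ∑ j, ξ j * w j := by
    rw [PiLp.inner_apply]
    simp [RCLike.inner_apply, conj_trivial]
    exact Finset.sum_congr rfl (fun j _ => mul_comm _ _)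
  rw [this]
  calc |∑ j, ξ j * w j| ≤ ∑ j, |ξ j * w j| := Finset.abs_sum_le_sum_abs _ _
    _ ≤ ∑ j, (1/2) * |w j| := by
        apply Finset.sum_le_sum
        intro j _
        rw [abs_mul]
        exact mul_le_mul_of_nonneg_right (hξ j) (abs_nonneg _)
    _ = (1/2) * ∑ j, |w j| := by rw [Finset.mul_sum]

section Torus

variable (s : Fin d → ℝ)

def torusMk (ξ : Ed d) : ∀ j : Fin d, AddCircle (2 * s j) := fun j => (ξ j : AddCircle (2 * s j))

def Lvec (m : Fin d → ℤ) : Ed d := (WithLp.equiv 2 (Fin d → ℝ)).symm (fun j => 2 * s j * (m j : ℝ))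

lemma Lvec_apply (m : Fin d → ℤ) (j : Fin d) : Lvec s m j = 2 * s j * (m j : ℝ) := rfl

lemma add_apply' (ξ η : Ed d) (j : Fin d) : (ξ + η) j = ξ j + η j := rfl

lemma torusMk_add_Lvec (ξ : Ed d) (m : Fin d → ℤ) :
    torusMk s (ξ + Lvec s m) = torusMk s ξ := by
  funext j
  show ((ξ j + 2 * s j * (m j : ℝ) : ℝ) : AddCircle (2 * s j)) = ((ξ j : ℝ) : AddCircle (2 * s j))
  rw [AddCircle.coe_add]
  have : ((2 * s j * (m j : ℝ) : ℝ) : AddCircle (2 * s j)) = 0 := by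
    rw [AddCircle.coe_eq_zero_iff]
    exact ⟨m j, by push_cast [zsmul_eq_mul]; ring⟩
  rw [this, add_zero]

lemma contEval (j : Fin d) : Continuous (fun ξ : Ed d => ξ j) := by
  exact (continuous_apply j).comp (PiLp.continuous_ofLp 2 (fun _ : Fin d => ℝ))

lemma torusMk_continuous : Continuous (torusMk s) := by
  apply continuous_pi
  intro j
  exact (AddCircle.continuous_mk' (2 * s j)).comp (contEval j)

lemma torus_quotient : IsOpenQuotientMap (torusMk s) := by
  have h1 : IsOpenQuotientMap (Pi.map (fun (j : Fin d) (x : ℝ) => (x : AddCircle (2 * s j)))) :=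
    IsOpenQuotientMap.piMap (fun j => QuotientAddGroup.isOpenQuotientMap_mk)
  let e : Ed d ≃ₜ (Fin d → ℝ) :=
    ⟨WithLp.equiv 2 (Fin d → ℝ), PiLp.continuous_ofLp 2 _, PiLp.continuous_toLp 2 _⟩
  have h2 : IsOpenQuotientMap (⇑e) := ⟨e.surjective, e.continuous, e.isOpenMap⟩
  have heq : torusMk s =
      (Pi.map (fun (j : Fin d) (x : ℝ) => (x : AddCircle (2 * s j)))) ∘ ⇑e := rfl
  rw [heq]
  exact h1.comp h2

/-- The coordinates of two reals mapping to the same point of `AddCircle p` differ by `ℤ • p`. -/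
lemma coe_eq_coe {p : ℝ} {x y : ℝ} (h : (x : AddCircle p) = y) : ∃ z : ℤ, y - x = z * p := by
  have := (QuotientAddGroup.eq (s := AddSubgroup.zmultiples p)).1 h
  obtain ⟨z, hz⟩ := AddSubgroup.mem_zmultiples_iff.1 this
  exact ⟨z, by rw [zsmul_eq_mul] at hz; linarith⟩

lemma eq_of_coe_eq {p : ℝ} (hp : 0 < p) {x y : ℝ} (h : (x : AddCircle p) = y)
    (hxy : |y - x| < p) : x = y := by
  obtain ⟨z, hz⟩ := coe_eq_coe h
  have hz0 : z = 0 := by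
    by_contra hz0
    have h1 : (1 : ℝ) ≤ |(z : ℝ)| := by
      rw [← Int.cast_abs]
      exact_mod_cast Int.one_le_abs hz0
    rw [hz, abs_mul, abs_of_pos hp] at hxy
    nlinarith
  rw [hz0] at hz
  simp at hz
  linarith [hz]

variable [∀ j, Fact (0 < 2 * s j)]

def tChar (n : Fin d → ℤ) : C(∀ j : Fin d, AddCircle (2 * s j), ℂ) :=
  ⟨fun t => ∏ j, fourier (n j) (t j), by
    apply continuous_finset_prod
    intro j _
    exact (fourier (n j)).continuous.comp (continuous_apply j)⟩

lemma tChar_apply (n : Fin d → ℤ) (t : ∀ j : Fin d, AddCircle (2 * s j)) :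
    tChar s n t = ∏ j, fourier (n j) (t j) := rfl

lemma tChar_zero : tChar s 0 = 1 := by
  ext t
  rw [tChar_apply]
  simp [fourier_zero]

lemma tChar_mul (n m : Fin d → ℤ) : tChar s n * tChar s m = tChar s (n + m) := by
  ext t
  simp only [ContinuousMap.mul_apply, tChar_apply, ← Finset.prod_mul_distrib]
  congr 1 with j
  rw [Pi.add_apply, fourier_add]

lemma tChar_star (n : Fin d → ℤ) : star (tChar s n) = tChar s (-n) := by
  ext t
  simp only [ContinuousMap.star_apply, tChar_apply, star_prod]
  congr 1 with j
  rw [Pi.neg_apply, fourier_neg]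
  rfl

lemma inner_latticePt (ξ : Ed d) (n : Fin d → ℤ) :
    ⟪ξ, latticePt d s n⟫ = ∑ j, ξ j * ((n j : ℝ) / (2 * s j)) := by
  rw [PiLp.inner_apply]
  simp [latticePt, RCLike.inner_apply, conj_trivial]
  exact Finset.sum_congr rfl (fun j _ => mul_comm _ _)

lemma tChar_torusMk (n : Fin d → ℤ) (ξ : Ed d) :
    tChar s n (torusMk s ξ) = eC (2 * π * ⟪ξ, latticePt d s n⟫) := by
  show (∏ j, fourier (n j) ((ξ j : AddCircle (2 * s j)))) = _
  simp_rw [fourier_coe_apply]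
  rw [← Complex.exp_sum]
  show _ = Complex.exp _
  congr 1
  rw [inner_latticePt]
  push_cast
  rw [Finset.mul_sum, Finset.sum_mul]
  apply Finset.sum_congr rfl
  intro j _
  ring

lemma integrable_mul_cont {K : Ed d → ℂ} (hK : Integrable K)
    (f : C(∀ j : Fin d, AddCircle (2 * s j), ℂ)) :
    Integrable (fun ξ => K ξ * f (torusMk s ξ)) := by
  haveI : ∀ j, CompactSpace (AddCircle (2 * s j)) := fun j => inferInstance
  have := hK.bdd_mul (c := ‖f‖) (f := fun ξ => f (torusMk s ξ))
    (Continuous.aestronglyMeasurable (f.continuous.comp (torusMk_continuous s)))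
    (Eventually.of_forall fun ξ => f.norm_coe_le_norm _)
  simpa [mul_comm] using this

lemma integral_contMap_eq_zero {K : Ed d → ℂ} (hK : Integrable K)
    (hcoef : ∀ n : Fin d → ℤ, ∫ ξ, K ξ * tChar s n (torusMk s ξ) = 0)
    (f : C(∀ j : Fin d, AddCircle (2 * s j), ℂ)) :
    ∫ ξ, K ξ * f (torusMk s ξ) = 0 := by
  haveI : ∀ j, CompactSpace (AddCircle (2 * s j)) := fun j => inferInstance
  set L : C(∀ j : Fin d, AddCircle (2 * s j), ℂ) → ℂ :=
    fun f => ∫ ξ, K ξ * f (torusMk s ξ) with hLdef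
  -- L is Lipschitz
  have hLip : LipschitzWith (Real.toNNReal (∫ ξ, ‖K ξ‖)) L := by
    apply LipschitzWith.of_dist_le_mul
    intro f g
    rw [Real.coe_toNNReal _ (integral_nonneg (fun ξ => norm_nonneg _))]
    rw [dist_eq_norm, hLdef]
    simp only
    rw [← integral_sub (integrable_mul_cont s hK f) (integrable_mul_cont s hK g)]
    refine le_trans (norm_integral_le_integral_norm _) ?_
    rw [← integral_mul_const]
    apply integral_mono ((integrable_mul_cont s hK f).sub (integrable_mul_cont s hK g)).norm
      (hK.norm.mul_const _)
    intro ξ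
    simp only [Pi.sub_apply]
    rw [← mul_sub, norm_mul]
    refine mul_le_mul_of_nonneg_left ?_ (norm_nonneg _)
    rw [← dist_eq_norm]
    exact ContinuousMap.dist_apply_le_dist _
  have hZclosed : IsClosed {f : C(∀ j : Fin d, AddCircle (2 * s j), ℂ) | L f = 0} :=
    isClosed_eq hLip.continuous continuous_const
  -- L vanishes on the span of the characters
  have hspan : ∀ f ∈ Submodule.span ℂ (Set.range (tChar s)), L f = 0 := by
    intro f hf
    refine Submodule.span_induction ?_ ?_ ?_ ?_ hf
    · rintro x ⟨n, rfl⟩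
      exact hcoef n
    · simp [hLdef]
    · intro x y hx hy hLx hLy
      have : L (x + y) = L x + L y := by
        rw [hLdef]
        simp only [ContinuousMap.add_apply]
        simp_rw [mul_add]
        exact integral_add (integrable_mul_cont s hK x) (integrable_mul_cont s hK y)
      rw [this, hLx, hLy, add_zero]
    · intro a x hx hLx
      have : L (a • x) = a * L x := by
        rw [hLdef]
        simp only [ContinuousMap.smul_apply, smul_eq_mul]
        simp_rw [mul_left_comm _ a _]
        exact integral_const_mul a _
      rw [this, hLx, mul_zero]
  -- the span contains the star subalgebra generated by the characters
  have hmulgen : ∀ (n : Fin d → ℤ) y, y ∈ Submodule.span ℂ (Set.range (tChar s)) →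
      tChar s n * y ∈ Submodule.span ℂ (Set.range (tChar s)) := by
    intro n y hy
    refine Submodule.span_induction ?_ ?_ ?_ ?_ hy
    · rintro x ⟨m, rfl⟩
      rw [tChar_mul]
      exact Submodule.subset_span ⟨n + m, rfl⟩
    · rw [mul_zero]; exact Submodule.zero_mem _
    · intro x y _ _ hx hy
      rw [mul_add]; exact Submodule.add_mem _ hx hy
    · intro a x _ hx
      rw [mul_smul_comm]; exact Submodule.smul_mem _ a hx
  have hmul : ∀ x y, x ∈ Submodule.span ℂ (Set.range (tChar s)) →
      y ∈ Submodule.span ℂ (Set.range (tChar s)) →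
      x * y ∈ Submodule.span ℂ (Set.range (tChar s)) := by
    intro x y hx hy
    refine Submodule.span_induction ?_ ?_ ?_ ?_ hx
    · rintro x ⟨n, rfl⟩
      exact hmulgen n y hy
    · rw [zero_mul]; exact Submodule.zero_mem _
    · intro x x' _ _ hx hx'
      rw [add_mul]; exact Submodule.add_mem _ hx hx'
    · intro a x _ hx
      rw [smul_mul_assoc]; exact Submodule.smul_mem _ a hx
  have hstar : ∀ x, x ∈ Submodule.span ℂ (Set.range (tChar s)) →
      star x ∈ Submodule.span ℂ (Set.range (tChar s)) := by
    intro x hx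
    refine Submodule.span_induction ?_ ?_ ?_ ?_ hx
    · rintro x ⟨n, rfl⟩
      rw [tChar_star]
      exact Submodule.subset_span ⟨-n, rfl⟩
    · rw [star_zero]; exact Submodule.zero_mem _
    · intro x y _ _ hx hy
      rw [star_add]; exact Submodule.add_mem _ hx hy
    · intro a x _ hx
      rw [star_smul]
      exact Submodule.smul_mem _ _ hx
  have hadj : ∀ f ∈ StarAlgebra.adjoin ℂ (Set.range (tChar s)),
      f ∈ Submodule.span ℂ (Set.range (tChar s)) := by
    intro f hf
    refine StarAlgebra.adjoin_induction ?_ ?_ ?_ ?_ ?_ hf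
    · intro x hx
      exact Submodule.subset_span hx
    · intro r
      have : (algebraMap ℂ C(∀ j : Fin d, AddCircle (2 * s j), ℂ)) r = r • tChar s 0 := by
        rw [Algebra.algebraMap_eq_smul_one, tChar_zero]
      rw [this]
      exact Submodule.smul_mem _ _ (Submodule.subset_span ⟨0, rfl⟩)
    · intro x y _ _ hx hy
      exact Submodule.add_mem _ hx hy
    · intro x y hx' hy' hx hy
      exact hmul x y hx hy
    · intro x _ hx
      exact hstar x hx
  -- separation of points
  have hsep : (StarAlgebra.adjoin ℂ (Set.range (tChar s))).SeparatesPoints := by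
    intro t t' htt'
    have : ∃ j, t j ≠ t' j := by
      by_contra hco
      push_neg at hco
      exact htt' (funext hco)
    obtain ⟨j, hj⟩ := this
    refine ⟨_, ⟨tChar s (Pi.single j 1), StarAlgebra.subset_adjoin ℂ _ ⟨_, rfl⟩, rfl⟩, ?_⟩
    have heval : ∀ u : ∀ j : Fin d, AddCircle (2 * s j),
        tChar s (Pi.single j 1) u = fourier 1 (u j) := by
      intro u
      rw [tChar_apply]
      rw [Finset.prod_eq_single j]
      · rw [Pi.single_eq_same]
      · intro j' _ hj'
        rw [Pi.single_eq_of_ne hj', fourier_zero]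
      · intro hj'
        exact absurd (Finset.mem_univ j) hj'
    simp only [heval]
    rw [fourier_one, fourier_one]
    intro hc
    apply hj
    apply AddCircle.injective_toCircle (Fact.out (p := 0 < 2 * s j)).ne'
    exact Subtype.coe_inj.1 hc
  -- Stone-Weierstrass
  have hSW := ContinuousMap.starSubalgebra_topologicalClosure_eq_top_of_separatesPoints
    (StarAlgebra.adjoin ℂ (Set.range (tChar s))) hsep
  have hcl : closure ((StarAlgebra.adjoin ℂ (Set.range (tChar s)) :
      StarSubalgebra ℂ C(∀ j : Fin d, AddCircle (2 * s j), ℂ)) :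
      Set C(∀ j : Fin d, AddCircle (2 * s j), ℂ)) = Set.univ := by
    rw [← StarSubalgebra.topologicalClosure_coe, hSW]
    rfl
  have hfmem : f ∈ closure ((StarAlgebra.adjoin ℂ (Set.range (tChar s)) :
      StarSubalgebra ℂ C(∀ j : Fin d, AddCircle (2 * s j), ℂ)) :
      Set C(∀ j : Fin d, AddCircle (2 * s j), ℂ)) := by
    rw [hcl]; trivial
  have hsub : ((StarAlgebra.adjoin ℂ (Set.range (tChar s)) :
      StarSubalgebra ℂ C(∀ j : Fin d, AddCircle (2 * s j), ℂ)) :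
      Set C(∀ j : Fin d, AddCircle (2 * s j), ℂ)) ⊆
      {f | L f = 0} := fun x hx => hspan x (hadj x hx)
  exact (hZclosed.closure_subset ((closure_mono hsub) hfmem))

lemma integral_periodic_eq_zero {K : Ed d → ℂ} (hK : Integrable K)
    (hcoef : ∀ n : Fin d → ℤ, ∫ ξ, K ξ * tChar s n (torusMk s ξ) = 0)
    (F : Ed d → ℂ) (hFc : Continuous F) (hFper : ∀ ξ m, F (ξ + Lvec s m) = F ξ) :
    ∫ ξ, K ξ * F ξ = 0 := by
  set fT : (∀ j : Fin d, AddCircle (2 * s j)) → ℂ := fun t =>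
    F ((WithLp.equiv 2 (Fin d → ℝ)).symm
      (fun j => ((AddCircle.equivIco (2 * s j) 0 (t j) : ℝ)))) with hfT
  have h1 : ∀ ξ, fT (torusMk s ξ) = F ξ := by
    intro ξ
    have hrep : ∀ j, ((AddCircle.equivIco (2 * s j) 0 ((torusMk s ξ) j)) : ℝ)
        = ξ j + 2 * s j * ((-⌊ξ j / (2 * s j)⌋ : ℤ) : ℝ) := by
      intro j
      show ((AddCircle.equivIco (2 * s j) 0 ((ξ j : ℝ) : AddCircle (2 * s j))) : ℝ) = _
      rw [AddCircle.coe_equivIco_mk_apply]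
      have hp : (0:ℝ) < 2 * s j := Fact.out
      rw [← Int.self_sub_floor]
      push_cast
      have hs0 : s j ≠ 0 := (by linarith : (0:ℝ) < s j).ne'
      field_simp
      ring
    have harg : (fun j => ((AddCircle.equivIco (2 * s j) 0 ((torusMk s ξ) j)) : ℝ))
        = fun j => ξ j + 2 * s j * ((-⌊ξ j / (2 * s j)⌋ : ℤ) : ℝ) := funext hrep
    show F ((WithLp.equiv 2 (Fin d → ℝ)).symm
        (fun j => ((AddCircle.equivIco (2 * s j) 0 ((torusMk s ξ) j)) : ℝ))) = F ξ
    rw [harg]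
    have hsum : (WithLp.equiv 2 (Fin d → ℝ)).symm
        (fun j => ξ j + 2 * s j * ((-⌊ξ j / (2 * s j)⌋ : ℤ) : ℝ))
        = ξ + Lvec s (fun j => -⌊ξ j / (2 * s j)⌋) := rfl
    rw [hsum, hFper]
  have h2 : Continuous fT := by
    apply (torus_quotient s).continuous_comp_iff.1
    rw [show fT ∘ torusMk s = F from funext h1]
    exact hFc
  have hz := integral_contMap_eq_zero s hK hcoef ⟨fT, h2⟩
  simp only [ContinuousMap.coe_mk] at hz
  rw [show (fun ξ => K ξ * F ξ) = fun ξ => K ξ * fT (torusMk s ξ) from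
    funext fun ξ => by rw [h1]]
  exact hz

end Torus

lemma hyperplane_null (j : Fin d) (c : ℝ) : (volume : Measure (Ed d)) {ξ : Ed d | ξ j = c} = 0 := by
  have hmp := EuclideanSpace.volume_preserving_symm_measurableEquiv_toLp (Fin d)
  have hmeas : MeasurableSet {f : Fin d → ℝ | f j = c} :=
    measurableSet_eq_fun (measurable_pi_apply j) measurable_const
  have hset : {ξ : Ed d | ξ j = c}
      = (MeasurableEquiv.toLp 2 (Fin d → ℝ)).symm ⁻¹' {f | f j = c} := rfl
  rw [hset, hmp.measure_preimage hmeas.nullMeasurableSet]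
  rw [MeasureTheory.volume_pi]
  exact Measure.pi_hyperplane (fun _ => (volume : Measure ℝ)) j c

/-- Main uniqueness lemma. -/
lemma keyUnique (hd : 0 < d) (s : Fin d → ℝ) (hs : ∀ j, 1 ≤ s j) {K : Ed d → ℂ}
    (hK : Integrable K)
    (hsupp : ∀ ξ : Ed d, (∃ j, 1 < |ξ j|) → K ξ = 0)
    (hcoef : ∀ n : Fin d → ℤ, EI K (latticePt d s n) = 0) :
    ∀ᵐ ξ, K ξ = 0 := by
  classical
  haveI : ∀ j, Fact (0 < 2 * s j) := fun j => ⟨by linarith [hs j]⟩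
  haveI : ∀ j, CompactSpace (AddCircle (2 * s j)) := fun j => inferInstance
  have hψcont : Continuous (torusMk s) := torusMk_continuous s
  have hψq : IsOpenQuotientMap (torusMk s) := torus_quotient s
  have hcoef' : ∀ n : Fin d → ℤ, ∫ ξ, K ξ * tChar s n (torusMk s ξ) = 0 := by
    intro n
    rw [show (fun ξ => K ξ * tChar s n (torusMk s ξ))
      = fun ξ => K ξ * eC (2 * π * ⟪ξ, latticePt d s n⟫) from
      funext fun ξ => by rw [tChar_torusMk]]
    exact hcoef n
  set Bo : Set (Ed d) := {ξ | ∀ j, |ξ j| < s j} with hBodef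
  have hBoOpen : IsOpen Bo := by
    have : Bo = ⋂ j, {ξ : Ed d | |ξ j| < s j} := by
      ext ξ; simp [hBodef, Set.mem_iInter]
    rw [this]
    apply isOpen_iInter_of_finite
    intro j
    exact isOpen_lt (continuous_abs.comp (contEval j)) continuous_const
  -- step 1: integral over compact subsets of the box vanishes
  have hBoxCompact : ∀ A : Set (Ed d), IsCompact A → A ⊆ Bo → ∫ ξ in A, K ξ = 0 := by
    intro A hAcomp hABo
    rcases A.eq_empty_or_nonempty with rfl | hAne
    · simp
    set S₁ : Set (Ed d) := torusMk s ⁻¹' (torusMk s '' A) with hS₁def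
    set S₂ : Set (Ed d) := torusMk s ⁻¹' ((torusMk s '' Bo)ᶜ) with hS₂def
    have hS₁closed : IsClosed S₁ := ((hAcomp.image hψcont).isClosed).preimage hψcont
    have hS₂closed : IsClosed S₂ :=
      (isClosed_compl_iff.2 (hψq.isOpenMap Bo hBoOpen)).preimage hψcont
    have hS₁ne : S₁.Nonempty := by
      obtain ⟨a, ha⟩ := hAne
      exact ⟨a, Set.mem_preimage.2 (Set.mem_image_of_mem _ ha)⟩
    have hS₂ne : S₂.Nonempty := by
      refine ⟨(WithLp.equiv 2 (Fin d → ℝ)).symm (fun j => s j), ?_⟩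
      simp only [hS₂def, Set.mem_preimage, Set.mem_compl_iff]
      rintro ⟨b, hbBo, hbe⟩
      set j₀ : Fin d := ⟨0, hd⟩
      have hco : ((b j₀ : ℝ) : AddCircle (2 * s j₀)) = ((s j₀ : ℝ) : AddCircle (2 * s j₀)) :=
        congrFun hbe j₀
      have hb := hbBo j₀
      have : b j₀ = s j₀ := by
        apply eq_of_coe_eq (p := 2 * s j₀) (by linarith [hs j₀]) hco
        rw [abs_sub_lt_iff]
        constructor
        · have := abs_lt.1 hb
          linarith [this.1, this.2, hs j₀]
        · have := abs_lt.1 hb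
          linarith [this.1, this.2, hs j₀]
      rw [this] at hb
      have := abs_lt.1 hb
      linarith [this.2]
    have hS₁subS₂c : S₁ ⊆ S₂ᶜ := by
      intro ξ hξ
      simp only [hS₂def, Set.mem_compl_iff, Set.mem_preimage, not_not]
      exact Set.image_mono hABo (Set.mem_preimage.1 hξ)
    -- invariance under lattice translations
    have hinvS : ∀ (V : Set (∀ j : Fin d, AddCircle (2 * s j))) (ξ : Ed d) (m : Fin d → ℤ),
        ξ + Lvec s m ∈ torusMk s ⁻¹' V ↔ ξ ∈ torusMk s ⁻¹' V := by
      intro V ξ m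
      simp [Set.mem_preimage, torusMk_add_Lvec]
    have hinfDist : ∀ (S : Set (Ed d)), (∀ ξ m, (ξ + Lvec s m ∈ S ↔ ξ ∈ S)) →
        ∀ (ξ : Ed d) (m : Fin d → ℤ),
        Metric.infDist (ξ + Lvec s m) S = Metric.infDist ξ S := by
      intro S hinv ξ m
      have himg : (fun x => x + Lvec s m) '' S = S := by
        ext y
        constructor
        · rintro ⟨x, hx, rfl⟩
          exact (hinv x m).2 hx
        · intro hy
          exact ⟨y - Lvec s m, (hinv (y - Lvec s m) m).1 (by simpa using hy), by simp⟩
      conv_lhs => rw [show S = (fun x => x + Lvec s m) '' S from himg.symm]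
      exact Metric.infDist_image (isometry_add_right _)
    -- the approximating sequence
    set Φ : ℕ → Ed d → ℝ := fun k ξ =>
      max 0 (1 - k * Metric.infDist ξ S₁) * min 1 (k * Metric.infDist ξ S₂) with hΦdef
    have hΦcont : ∀ k, Continuous (Φ k) := by
      intro k
      apply Continuous.mul
      · exact continuous_const.max (continuous_const.sub
          (continuous_const.mul (Metric.continuous_infDist_pt _)))
      · exact continuous_const.min (continuous_const.mul (Metric.continuous_infDist_pt _))
    have hΦper : ∀ k ξ m, Φ k (ξ + Lvec s m) = Φ k ξ := by
      intro k ξ m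
      rw [hΦdef]
      simp only
      rw [hinfDist S₁ (hinvS _) ξ m, hinfDist S₂ (hinvS _) ξ m]
    have hΦ0 : ∀ k ξ, 0 ≤ Φ k ξ := by
      intro k ξ
      apply mul_nonneg (le_max_left _ _)
      exact le_min (by norm_num) (mul_nonneg (Nat.cast_nonneg k) Metric.infDist_nonneg)
    have hΦ1 : ∀ k ξ, Φ k ξ ≤ 1 := by
      intro k ξ
      apply mul_le_one₀
      · apply max_le (by norm_num)
        have : (0:ℝ) ≤ (k:ℝ) * Metric.infDist ξ S₁ :=
          mul_nonneg (Nat.cast_nonneg k) Metric.infDist_nonneg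
        linarith
      · exact le_min (by norm_num) (mul_nonneg (Nat.cast_nonneg k) Metric.infDist_nonneg)
      · exact min_le_left _ _
    have hΦlim : ∀ ξ, Tendsto (fun k : ℕ => Φ k ξ) atTop
        (𝓝 (if ξ ∈ S₁ then (1:ℝ) else 0)) := by
      intro ξ
      by_cases hξ : ξ ∈ S₁
      · rw [if_pos hξ]
        have hd1 : Metric.infDist ξ S₁ = 0 := Metric.infDist_zero_of_mem hξ
        have hδ : 0 < Metric.infDist ξ S₂ :=
          (hS₂closed.notMem_iff_infDist_pos hS₂ne).1 (hS₁subS₂c hξ)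
        apply Tendsto.congr' _ tendsto_const_nhds
        rw [EventuallyEq, eventually_atTop]
        obtain ⟨N, hN⟩ := exists_nat_ge (1 / Metric.infDist ξ S₂)
        refine ⟨N, fun k hk => ?_⟩
        rw [hΦdef]
        simp only
        rw [hd1]
        have h1 : (1:ℝ) ≤ k * Metric.infDist ξ S₂ := by
          rw [← Nat.cast_le (α := ℝ)] at hk
          have : 1 / Metric.infDist ξ S₂ ≤ (k:ℝ) := le_trans hN hk
          rw [div_le_iff₀ hδ] at this
          linarith
        rw [min_eq_left h1]
        norm_num
      · rw [if_neg hξ]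
        have hδ : 0 < Metric.infDist ξ S₁ :=
          (hS₁closed.notMem_iff_infDist_pos hS₁ne).1 hξ
        apply Tendsto.congr' _ tendsto_const_nhds
        rw [EventuallyEq, eventually_atTop]
        obtain ⟨N, hN⟩ := exists_nat_ge (1 / Metric.infDist ξ S₁)
        refine ⟨N, fun k hk => ?_⟩
        rw [hΦdef]
        simp only
        have h1 : (1:ℝ) ≤ k * Metric.infDist ξ S₁ := by
          rw [← Nat.cast_le (α := ℝ)] at hk
          have : 1 / Metric.infDist ξ S₁ ≤ (k:ℝ) := le_trans hN hk
          rw [div_le_iff₀ hδ] at this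
          linarith
        rw [max_eq_left (by linarith)]
        rw [zero_mul]
    -- dominated convergence
    have hDCT : Tendsto (fun k : ℕ => ∫ ξ, K ξ * ((Φ k ξ : ℝ) : ℂ)) atTop
        (𝓝 (∫ ξ, K ξ * (if ξ ∈ S₁ then (1:ℂ) else 0))) := by
      apply tendsto_integral_of_dominated_convergence (fun ξ => ‖K ξ‖)
      · intro k
        exact hK.aestronglyMeasurable.mul
          ((Complex.continuous_ofReal.comp (hΦcont k)).aestronglyMeasurable)
      · exact hK.norm
      · intro k
        filter_upwards with ξ
        rw [norm_mul, Complex.norm_real, Real.norm_eq_abs,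
          abs_of_nonneg (hΦ0 k ξ)]
        calc ‖K ξ‖ * Φ k ξ ≤ ‖K ξ‖ * 1 :=
              mul_le_mul_of_nonneg_left (hΦ1 k ξ) (norm_nonneg _)
          _ = ‖K ξ‖ := mul_one _
      · filter_upwards with ξ
        have hc : Tendsto (fun k : ℕ => ((Φ k ξ : ℝ) : ℂ)) atTop
            (𝓝 (((if ξ ∈ S₁ then (1:ℝ) else 0) : ℝ) : ℂ)) :=
          (Complex.continuous_ofReal.tendsto _).comp (hΦlim ξ)
        have heq : (((if ξ ∈ S₁ then (1:ℝ) else 0) : ℝ) : ℂ)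
            = (if ξ ∈ S₁ then (1:ℂ) else 0) := by
          split <;> simp
        rw [heq] at hc
        exact hc.const_mul (K ξ)
    have hzero : ∀ k : ℕ, ∫ ξ, K ξ * ((Φ k ξ : ℝ) : ℂ) = 0 := by
      intro k
      exact integral_periodic_eq_zero s hK hcoef' (fun ξ => ((Φ k ξ : ℝ) : ℂ))
        (Complex.continuous_ofReal.comp (hΦcont k))
        (fun ξ m => by rw [hΦper k ξ m])
    have hlim0 : ∫ ξ, K ξ * (if ξ ∈ S₁ then (1:ℂ) else 0) = 0 := by
      have : Tendsto (fun _ : ℕ => (0:ℂ)) atTop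
          (𝓝 (∫ ξ, K ξ * (if ξ ∈ S₁ then (1:ℂ) else 0))) := by
        apply hDCT.congr
        intro k
        rw [hzero k]
      exact tendsto_nhds_unique this tendsto_const_nhds
    -- identify with the integral over A
    have hident : ∀ ξ, K ξ * (if ξ ∈ S₁ then (1:ℂ) else 0) = Set.indicator A K ξ := by
      intro ξ
      rcases eq_or_ne (K ξ) 0 with hKξ | hKξ
      · rw [hKξ, zero_mul, Set.indicator_apply]
        split
        · exact hKξ.symm
        · rfl
      · have hcube : ∀ j, |ξ j| ≤ 1 := by
          by_contra hcon
          push_neg at hcon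
          obtain ⟨j, hj⟩ := hcon
          exact hKξ (hsupp ξ ⟨j, hj⟩)
        have hmem : ξ ∈ S₁ ↔ ξ ∈ A := by
          constructor
          · intro hξ
            obtain ⟨a, haA, hae⟩ := Set.mem_preimage.1 hξ
            have : a = ξ := by
              have hcoords : ∀ j, a j = ξ j := by
                intro j
                have hco : ((a j : ℝ) : AddCircle (2 * s j)) = ((ξ j : ℝ) : AddCircle (2 * s j)) :=
                  congrFun hae j
                apply eq_of_coe_eq (p := 2 * s j) (by linarith [hs j]) hco
                have h4 := abs_le.1 (hcube j)
                have h5 := abs_lt.1 (hABo haA j)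
                have hsj := hs j
                rw [abs_sub_lt_iff]
                exact ⟨by linarith [h4.2, h5.1], by linarith [h4.1, h5.2]⟩
              ext j
              exact hcoords j
            rw [← this]; exact haA
          · intro hξ
            exact Set.mem_preimage.2 (Set.mem_image_of_mem _ hξ)
        by_cases hA : ξ ∈ A
        · rw [if_pos (hmem.2 hA), Set.indicator_of_mem hA, mul_one]
        · rw [if_neg (fun h => hA (hmem.1 h)), Set.indicator_of_notMem hA, mul_zero]
    rw [show (fun ξ => K ξ * (if ξ ∈ S₁ then (1:ℂ) else 0)) = Set.indicator A K from
      funext hident] at hlim0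
    rw [← integral_indicator hAcomp.measurableSet]
    exact hlim0
  -- step 2: extend to measurable subsets of the box
  have hBoxMeas : ∀ B : Set (Ed d), MeasurableSet B → B ⊆ Bo → ∫ ξ in B, K ξ = 0 := by
    intro B hBmeas hBBo
    set ν : Measure (Ed d) := volume.withDensity (fun ξ => ‖K ξ‖₊) with hνdef
    haveI : IsFiniteMeasure ν := by
      constructor
      rw [hνdef, withDensity_apply _ MeasurableSet.univ]
      rw [Measure.restrict_univ]; exact hK.2
    have hνfin : ∀ E : Set (Ed d), ν E ≠ ⊤ := fun E => measure_ne_top ν E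
    have hbound : ∀ ε : ℝ, 0 < ε → ‖∫ ξ in B, K ξ‖ ≤ ε := by
      intro ε hε
      obtain ⟨A, hAB, hAcomp, hν⟩ := hBmeas.exists_isCompact_lt_add (hνfin B)
        (ε := ENNReal.ofReal ε) (by simp [hε])
      have hA0 : ∫ ξ in A, K ξ = 0 := hBoxCompact A hAcomp (hAB.trans hBBo)
      have hdiff := integral_diff (f := K) hAcomp.measurableSet hK.integrableOn hAB
      rw [hA0, sub_zero] at hdiff
      rw [← hdiff]
      have hN : ν (B \ A) < ENNReal.ofReal ε :=
        measure_diff_lt_of_lt_add hAcomp.measurableSet.nullMeasurableSet hAB (hνfin A) hν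
      have hnorm : ‖∫ ξ in B \ A, K ξ‖ ≤ (ν (B \ A)).toReal := by
        refine le_trans (norm_integral_le_integral_norm _) ?_
        have hInt : IntegrableOn K (B \ A) volume := hK.integrableOn
        have heq : ENNReal.ofReal (∫ ξ in B \ A, ‖K ξ‖)
            = ∫⁻ ξ in B \ A, ‖K ξ‖₊ := ofReal_integral_norm_eq_lintegral_enorm hInt
        have hν' : ν (B \ A) = ∫⁻ ξ in B \ A, ‖K ξ‖₊ := by
          rw [hνdef, withDensity_apply _ (hBmeas.diff hAcomp.measurableSet)]
        rw [hν', ← heq, ENNReal.toReal_ofReal (integral_nonneg (fun _ => norm_nonneg _))]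
      refine le_trans hnorm ?_
      have := (ENNReal.toReal_lt_toReal (hνfin _) (ENNReal.ofReal_ne_top)).2 hN
      rw [ENNReal.toReal_ofReal hε.le] at this
      exact this.le
    have : ‖∫ ξ in B, K ξ‖ ≤ 0 := by
      apply le_of_forall_pos_le_add
      intro ε hε
      rw [zero_add]
      exact hbound ε hε
    simpa using le_antisymm this (norm_nonneg _)
  -- step 3: conclude
  have hBoAE : ∀ᵐ ξ ∂(volume.restrict Bo), K ξ = 0 := by
    have := ae_eq_zero_of_forall_setIntegral_eq_of_sigmaFinite
      (μ := (volume : Measure (Ed d)).restrict Bo) (f := K) ?_ ?_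
    · filter_upwards [this] with ξ hξ using hξ
    · intro t htmeas _
      exact hK.restrict.restrict
    · intro t htmeas _
      rw [Measure.restrict_restrict htmeas]
      exact hBoxMeas (t ∩ Bo) (htmeas.inter hBoOpen.measurableSet) Set.inter_subset_right
  have hcompl : ∀ᵐ ξ ∂(volume.restrict Boᶜ), K ξ = 0 := by
    rw [ae_restrict_iff' hBoOpen.measurableSet.compl]
    set N : Set (Ed d) := ⋃ j : Fin d, ({ξ : Ed d | ξ j = s j} ∪ {ξ : Ed d | ξ j = -(s j)})
      with hNdef
    have hNnull : volume N = 0 := by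
      rw [hNdef]
      apply measure_iUnion_null
      intro j
      exact measure_union_null (hyperplane_null j (s j)) (hyperplane_null j (-(s j)))
    have hNae : ∀ᵐ ξ : Ed d, ξ ∉ N := by
      rw [ae_iff]
      simpa using hNnull
    filter_upwards [hNae] with ξ hξN hξBo
    by_contra hKne
    have hcube : ∀ j, |ξ j| ≤ 1 := by
      by_contra hcon
      push_neg at hcon
      obtain ⟨j, hj⟩ := hcon
      exact hKne (hsupp ξ ⟨j, hj⟩)
    have : ∃ j, s j ≤ |ξ j| := by
      by_contra hcon
      push_neg at hcon
      exact hξBo (fun j => hcon j)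
    obtain ⟨j, hj⟩ := this
    have : |ξ j| = s j := le_antisymm (le_trans (hcube j) (hs j)) hj
    apply hξN
    rw [hNdef]
    apply Set.mem_iUnion.2 ⟨j, ?_⟩
    rcases abs_eq (by linarith [hs j] : (0:ℝ) ≤ s j) |>.1 this with h | h
    · exact Or.inl h
    · exact Or.inr h
  exact ae_of_ae_restrict_of_ae_restrict_compl Bo hBoAE hcompl

lemma sq_eq_of_norm_eq {z w : ℂ} (hz : z.im = 0) (hw : w.im = 0) (h : ‖z‖ = ‖w‖) :
    z ^ 2 = w ^ 2 := by
  have hz' : z = ((z.re : ℝ) : ℂ) := Complex.ext rfl (by simp [hz])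
  have hw' : w = ((w.re : ℝ) : ℂ) := Complex.ext rfl (by simp [hw])
  rw [hz', hw'] at h ⊢
  rw [Complex.norm_real, Complex.norm_real, Real.norm_eq_abs, Real.norm_eq_abs] at h
  have hre : z.re ^ 2 = w.re ^ 2 := by
    rw [← sq_abs, ← sq_abs w.re, h]
  rw [← Complex.ofReal_pow, ← Complex.ofReal_pow]
  exact_mod_cast hre

end PR

open scoped Convolution

theorem stmt0 (d : ℕ) (g h : Ed d → ℂ)
    (s : Fin d → ℝ) (hs : ∀ j, 1 ≤ s j)
    (hg2 : MemLp g 2 volume) (hh2 : MemLp h 2 volume)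
    (hgr : ∀ x, (g x).im = 0) (hhr : ∀ x, (h x).im = 0)
    (hgbl : ∃ G : Ed d → ℂ, Integrable G ∧
      (∀ ξ : Ed d, (∃ j, (1:ℝ)/2 < |ξ j|) → G ξ = 0) ∧ ∀ x, g x = 𝓕⁻ G x)
    (hhbl : ∃ H : Ed d → ℂ, Integrable H ∧
      (∀ ξ : Ed d, (∃ j, (1:ℝ)/2 < |ξ j|) → H ξ = 0) ∧ ∀ x, h x = 𝓕⁻ H x)
    (hsamp : ∀ n : Fin d → ℤ, ‖g (latticePt d s n)‖ = ‖h (latticePt d s n)‖) :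
    g = h ∨ g = -h := by
  classical
  obtain ⟨G, hGint, hGsupp, hgF⟩ := hgbl
  obtain ⟨H, hHint, hHsupp, hhF⟩ := hhbl
  have hgEI : ∀ x, g x = PR.EI G x := fun x => by rw [hgF x, PR.EI_eq]
  have hhEI : ∀ x, h x = PR.EI H x := fun x => by rw [hhF x, PR.EI_eq]
  have hsq : ∀ n : Fin d → ℤ, g (latticePt d s n) ^ 2 = h (latticePt d s n) ^ 2 :=
    fun n => PR.sq_eq_of_norm_eq (hgr _) (hhr _) (hsamp n)
  rcases Nat.eq_zero_or_pos d with hd0 | hd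
  · subst hd0
    have hsub : ∀ a b : Ed 0, a = b := fun a b => PiLp.ext (fun j => Fin.elim0 j)
    set x₀ : Ed 0 := latticePt 0 s (fun _ => 0) with hx₀def
    have h2 : (g x₀ - h x₀) * (g x₀ + h x₀) = 0 := by
      linear_combination hsq (fun _ => 0)
    rcases mul_eq_zero.1 h2 with h1 | h1
    · left
      funext x
      rw [hsub x x₀]
      exact sub_eq_zero.1 h1
    · right
      funext x
      rw [hsub x x₀]
      show g x₀ = -(h x₀)
      linear_combination h1
  set L := ContinuousLinearMap.mul ℂ ℂ with hLdef
  set K : Ed d → ℂ := fun ξ => (G ⋆[L] G) ξ - (H ⋆[L] H) ξ with hKdef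
  have hKint : Integrable K :=
    ((hGint.integrable_convolution L hGint).sub (hHint.integrable_convolution L hHint))
  have hKsupp : ∀ ξ : Ed d, (∃ j, 1 < |ξ j|) → K ξ = 0 := by
    intro ξ hξ
    rw [hKdef]
    simp only
    rw [PR.conv_support hGsupp hGsupp ξ hξ, PR.conv_support hHsupp hHsupp ξ hξ, sub_zero]
  have hKEI : ∀ x, PR.EI K x = g x ^ 2 - h x ^ 2 := by
    intro x
    rw [hKdef]
    rw [PR.EI_sub (hGint.integrable_convolution L hGint)
      (hHint.integrable_convolution L hHint) x]
    rw [PR.EI_conv hGint hGint, PR.EI_conv hHint hHint]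
    rw [← hgEI, ← hhEI]
    ring
  have hKc : ∀ n : Fin d → ℤ, PR.EI K (latticePt d s n) = 0 := by
    intro n
    rw [hKEI, hsq n]
    ring
  have hK0 := PR.keyUnique hd s hs hKint hKsupp hKc
  have hF0 : ∀ x, g x ^ 2 - h x ^ 2 = 0 := by
    intro x
    rw [← hKEI x]
    unfold PR.EI
    apply integral_eq_zero_of_ae
    filter_upwards [hK0] with ξ hξ
    simp [hξ]
  by_cases hgh : g = h
  · exact Or.inl hgh
  right
  have hex : ∃ x₀, g x₀ ≠ h x₀ := by
    by_contra hc
    push_neg at hc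
    exact hgh (funext hc)
  obtain ⟨x₀, hx₀⟩ := hex
  funext y
  show g y = -(h y)
  set w : Ed d := y - x₀ with hwdef
  set C : ℝ := (1/2) * ∑ j, |w j| with hCdef
  have hC0 : 0 ≤ C := by
    rw [hCdef]
    positivity
  have hbound : ∀ (W : Ed d → ℂ), (∀ ξ : Ed d, (∃ j, (1:ℝ)/2 < |ξ j|) → W ξ = 0) →
      ∀ ξ, W ξ ≠ 0 → |⟪ξ, w⟫| ≤ C := by
    intro W hWsupp ξ hWξ
    have hcube : ∀ j, |ξ j| ≤ 1/2 := by
      by_contra hc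
      push_neg at hc
      obtain ⟨j, hj⟩ := hc
      exact hWξ (hWsupp ξ ⟨j, hj⟩)
    exact PR.inner_bound hcube w
  have hW₁supp : ∀ ξ : Ed d, (∃ j, (1:ℝ)/2 < |ξ j|) → G ξ - H ξ = 0 := by
    intro ξ hξ
    rw [hGsupp ξ hξ, hHsupp ξ hξ, sub_zero]
  have hW₂supp : ∀ ξ : Ed d, (∃ j, (1:ℝ)/2 < |ξ j|) → G ξ + H ξ = 0 := by
    intro ξ hξ
    rw [hGsupp ξ hξ, hHsupp ξ hξ, add_zero]
  have hW₁int : Integrable (fun ξ => G ξ - H ξ) := hGint.sub hHint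
  have hW₂int : Integrable (fun ξ => G ξ + H ξ) := hGint.add hHint
  have hU : Differentiable ℂ (PR.lineF (fun ξ => G ξ - H ξ) x₀ w) :=
    PR.lineF_differentiable hW₁int x₀ w hC0 (fun ξ hξ => hbound _ hW₁supp ξ hξ)
  have hV : Differentiable ℂ (PR.lineF (fun ξ => G ξ + H ξ) x₀ w) :=
    PR.lineF_differentiable hW₂int x₀ w hC0 (fun ξ hξ => hbound _ hW₂supp ξ hξ)
  have hU0 : PR.lineF (fun ξ => G ξ - H ξ) x₀ w 0 ≠ 0 := by
    rw [show (0 : ℂ) = ((0:ℝ) : ℂ) by norm_num, PR.lineF_real]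
    rw [show x₀ + (0:ℝ) • w = x₀ by rw [zero_smul, add_zero]]
    rw [PR.EI_sub hGint hHint, ← hgEI, ← hhEI]
    exact sub_ne_zero.2 hx₀
  have hprod : ∀ t : ℝ, PR.lineF (fun ξ => G ξ - H ξ) x₀ w t
      * PR.lineF (fun ξ => G ξ + H ξ) x₀ w t = 0 := by
    intro t
    rw [PR.lineF_real, PR.lineF_real]
    rw [PR.EI_sub hGint hHint, PR.EI_add hGint hHint, ← hgEI, ← hhEI]
    linear_combination hF0 (x₀ + t • w)
  have hVz := PR.dichotomy hU hV hU0 hprod 1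
  rw [PR.lineF_real] at hVz
  rw [show x₀ + (1:ℝ) • w = y by rw [one_smul, hwdef, add_sub_cancel]] at hVz
  rw [PR.EI_add hGint hHint, ← hgEI, ← hhEI] at hVz
  linear_combination hVz
end
end

section
/- Let $u, v \in L^2(\mathbb{R}^d)$ be band-limited with $\mathrm{supp}\,\hat{u}, \mathrm{supp}\,\hat{v} \subseteq [-1/2,1/2]^d$, and suppose $w := u \cdot v$ (pointwise product) vanishes on the lattice $D[2\mathbf{s}]^{-1}\mathbb{Z}^d$ with all $s_j \geq 1$. Then $u = 0$ or $v = 0$. -/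
open MeasureTheory Real Filter
open scoped FourierTransform ENNReal Topology

noncomputable section

namespace StmtAux

open scoped Pointwise

variable {d : ℕ}

lemma conv_integrable (U V : Ed d → ℂ) (hU : Integrable U volume) (hV : Integrable V volume) :
    Integrable (fun ξ : Ed d => ∫ η, U η * V (ξ - η)) volume := by
  have heq : (fun ξ : Ed d => ∫ η, U η * V (ξ - η))
      = convolution U V (ContinuousLinearMap.mul ℝ ℂ) volume := by
    ext ξ
    rw [convolution_def]
    simp only [ContinuousLinearMap.mul_apply']
  rw [heq]
  exact hU.integrable_convolution _ hV

lemma conv_support (U V : Ed d → ℂ)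
    (hUs : ∀ ξ : Ed d, (∃ j, (1:ℝ)/2 < |ξ j|) → U ξ = 0)
    (hVs : ∀ ξ : Ed d, (∃ j, (1:ℝ)/2 < |ξ j|) → V ξ = 0) :
    ∀ ξ : Ed d, (∃ j, (1:ℝ) < |ξ j|) → (∫ η, U η * V (ξ - η)) = 0 := by
  rintro ξ ⟨j, hj⟩
  have hz : ∀ η : Ed d, U η * V (ξ - η) = 0 := by
    intro η
    by_cases hη : (1:ℝ)/2 < |η j|
    · rw [hUs η ⟨j, hη⟩, zero_mul]
    · push_neg at hη
      have hsub : (ξ - η) j = ξ j - η j := rfl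
      have : (1:ℝ)/2 < |(ξ - η) j| := by
        rw [hsub]
        have := abs_sub_abs_le_abs_sub (ξ j) (η j)
        linarith
      rw [hVs _ ⟨j, this⟩, mul_zero]
  simp only [hz, integral_zero]

lemma conv_fourierInv (U V : Ed d → ℂ) (hU : Integrable U volume) (hV : Integrable V volume)
    (x : Ed d) :
    𝓕⁻ (fun ξ : Ed d => ∫ η, U η * V (ξ - η)) x = 𝓕⁻ U x * 𝓕⁻ V x := by
  set c : Ed d → ℂ := fun ξ => ((Real.fourierChar (inner ℝ ξ x : ℝ) : Circle) : ℂ) with hc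
  have hc_cont : Continuous c := by
    apply Continuous.subtype_val
    exact Real.continuous_fourierChar.comp (continuous_id.inner continuous_const)
  have hcnorm : ∀ ξ, ‖c ξ‖ = 1 := fun ξ => by
    simp [hc, Circle.norm_coe]
  have hcadd : ∀ a b : Ed d, c (a + b) = c a * c b := by
    intro a b
    simp only [hc, inner_add_left]
    rw [AddChar.map_add_eq_mul]
    simp
  have hint : Integrable (fun p : Ed d × Ed d => c p.1 * (U p.2 * V (p.1 - p.2)))
      (volume.prod volume) := by
    have h1 := hU.convolution_integrand (ContinuousLinearMap.mul ℝ ℂ) hV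
    simp only [ContinuousLinearMap.mul_apply'] at h1
    exact h1.bdd_mul ((hc_cont.comp continuous_fst).aestronglyMeasurable)
      (Eventually.of_forall fun p => le_of_eq (hcnorm p.1))
  have hcapp : ∀ ξ : Ed d, ((Real.fourierChar (inner ℝ ξ x : ℝ) : Circle) : ℂ) = c ξ :=
    fun _ => rfl
  rw [Real.fourierInv_eq, Real.fourierInv_eq, Real.fourierInv_eq]
  simp only [Circle.smul_def, hcapp]
  calc (∫ ξ : Ed d, c ξ * ∫ η, U η * V (ξ - η))
      = ∫ ξ : Ed d, ∫ η, c ξ * (U η * V (ξ - η)) := by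
        congr 1; ext ξ
        rw [integral_const_mul]
    _ = ∫ η : Ed d, ∫ ξ, c ξ * (U η * V (ξ - η)) := integral_integral_swap hint
    _ = ∫ η : Ed d, (c η * U η) * ∫ ζ, c ζ * V ζ := by
        congr 1; ext η
        have step1 : (∫ ξ : Ed d, c ξ * (U η * V (ξ - η)))
            = U η * ∫ ξ : Ed d, c ξ * V (ξ - η) := by
          rw [← integral_const_mul]
          congr 1; ext ξ; ring
        have step2 : (∫ ξ : Ed d, c ξ * V (ξ - η)) = c η * ∫ ζ : Ed d, c ζ * V ζ := by
          rw [← integral_add_right_eq_self (fun ξ : Ed d => c ξ * V (ξ - η)) η]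
          simp only [add_sub_cancel_right]
          rw [← integral_const_mul]
          congr 1; ext ζ
          rw [hcadd]
          ring
        rw [step1, step2]; ring
    _ = (∫ η : Ed d, c η * U η) * ∫ ζ : Ed d, c ζ * V ζ := by rw [integral_mul_const]

lemma hyperplane_null (j : Fin d) (c : ℝ) : volume {ξ : Ed d | ξ j = c} = 0 := by
  set l : Ed d →ₗ[ℝ] ℝ := (EuclideanSpace.proj j : Ed d →L[ℝ] ℝ).toLinearMap with hl
  have hker : (LinearMap.ker l : Submodule ℝ (Ed d)) ≠ ⊤ := by
    intro htop
    have h1 : EuclideanSpace.single j (1:ℝ) ∈ LinearMap.ker l := by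
      rw [htop]; trivial
    have h2 : l (EuclideanSpace.single j (1:ℝ)) = 1 := by
      simp [hl, PiLp.proj_apply, EuclideanSpace.single_apply]
    rw [LinearMap.mem_ker] at h1
    rw [h1] at h2
    exact zero_ne_one h2
  have hS : volume ((LinearMap.ker l : Submodule ℝ (Ed d)) : Set (Ed d)) = 0 :=
    Measure.addHaar_submodule volume _ hker
  have hset : {ξ : Ed d | ξ j = c}
      = (fun ξ : Ed d => (-(c • EuclideanSpace.single j (1:ℝ))) + ξ) ⁻¹'
        ((LinearMap.ker l : Submodule ℝ (Ed d)) : Set (Ed d)) := by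
    ext ξ
    simp only [Set.mem_setOf_eq, Set.mem_preimage, SetLike.mem_coe, LinearMap.mem_ker]
    have : l ((-(c • EuclideanSpace.single j (1:ℝ))) + ξ) = -c + ξ j := by
      simp [hl, PiLp.proj_apply, EuclideanSpace.single_apply]
    rw [this]
    constructor
    · intro h; rw [h]; ring
    · intro h; linarith
  rw [hset, measure_preimage_add]
  exact hS

lemma rep_cases {σ y r : ℝ} (hσ : 0 < σ) (hy : |y| ≤ σ) (hr : r ∈ Set.Ioc (-σ) σ) (m : ℤ)
    (hm : r - y = m * (2 * σ)) : r = y ∨ (y = -σ ∧ r = σ) := by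
  obtain ⟨hr1, hr2⟩ := hr
  rw [abs_le] at hy
  have hm0 : (0:ℤ) ≤ m := by
    by_contra h
    push_neg at h
    have : (m:ℝ) ≤ -1 := by exact_mod_cast (by omega : m ≤ -1)
    nlinarith
  have hm1 : m ≤ 1 := by
    by_contra h
    push_neg at h
    have : (2:ℝ) ≤ (m:ℝ) := by exact_mod_cast (by omega : (2:ℤ) ≤ m)
    nlinarith
  have hm01 : m = 0 ∨ m = 1 := by omega
  rcases hm01 with h | h
  · subst h; left; push_cast at hm; linarith
  · subst h; right
    push_cast at hm
    constructor <;> nlinarith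

lemma seam_bound {σ δ r ε' : ℝ} (hσ : 0 < σ) (hr : r ∈ Set.Ioc (-σ) σ)
    (hδ : |δ| < ε') (hε' : ε' ≤ σ) (q : ℤ) (hq : r - (-σ + δ) = q * (2 * σ)) :
    σ - ε' < |r| := by
  obtain ⟨hr1, hr2⟩ := hr
  rw [abs_lt] at hδ
  have hq0 : (0:ℤ) ≤ q := by
    by_contra h
    push_neg at h
    have : (q:ℝ) ≤ -1 := by exact_mod_cast (by omega : q ≤ -1)
    nlinarith
  have hq1 : q ≤ 1 := by
    by_contra h
    push_neg at h
    have : (2:ℝ) ≤ (q:ℝ) := by exact_mod_cast (by omega : (2:ℤ) ≤ q)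
    nlinarith
  have hq01 : q = 0 ∨ q = 1 := by omega
  rcases hq01 with h | h
  · subst h; push_cast at hq
    rw [lt_abs]; right; linarith
  · subst h; push_cast at hq
    rw [lt_abs]; left; linarith

set_option maxHeartbeats 1000000 in
lemma sampled_zero (s : Fin d → ℝ) (hs : ∀ j, 1 ≤ s j) (W : Ed d → ℂ)
    (hW : Integrable W volume) (hWs : ∀ ξ : Ed d, (∃ j, (1:ℝ) < |ξ j|) → W ξ = 0)
    (hsamp : ∀ n : Fin d → ℤ,
      (∫ ξ : Ed d, W ξ *
        Complex.exp ((2 * π * ∑ j, ξ j * ((n j : ℝ) / (2 * s j)) : ℝ) * Complex.I)) = 0) :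
    ∀ᵐ ξ : Ed d, W ξ = 0 := by
  classical
  have hspos : ∀ j, 0 < s j := fun j => lt_of_lt_of_le one_pos (hs j)
  haveI hFact : ∀ j : Fin d, Fact (0 < 2 * s j) := fun j => ⟨by linarith [hspos j]⟩
  set B : Set (Ed d) := {ξ | ∀ j, |ξ j| < s j} with hBdef
  have hBopen : IsOpen B := by
    have hBeq : B = ⋂ j, (fun ξ : Ed d => ξ j) ⁻¹' (Metric.ball 0 (s j)) := by
      ext ξ
      simp [hBdef, Set.mem_iInter, Real.dist_eq]
    rw [hBeq]
    exact isOpen_iInter_of_finite fun j =>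
      (Metric.isOpen_ball).preimage (EuclideanSpace.proj j).continuous
  set Φ : Ed d → (∀ j : Fin d, AddCircle (2 * s j)) :=
    fun ξ j => (ξ j : AddCircle (2 * s j)) with hΦdef
  have hΦcont : Continuous Φ :=
    continuous_pi fun j =>
      (QuotientAddGroup.isOpenQuotientMap_mk).continuous.comp (EuclideanSpace.proj j).continuous
  have hΦsurj : Function.Surjective Φ := by
    intro y
    have hexj : ∀ j, ∃ r : ℝ, (r : AddCircle (2 * s j)) = y j :=
      fun j => Quotient.exists_rep (y j)
    choose ξ hξ using hexj
    exact ⟨(WithLp.equiv 2 (Fin d → ℝ)).symm ξ, funext hξ⟩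
  have hΦopen : IsOpenMap Φ := by
    have h1 : IsOpenMap (Pi.map fun (j : Fin d) (y : ℝ) => (y : AddCircle (2 * s j))) :=
      IsOpenMap.piMap (fun j => (QuotientAddGroup.isOpenQuotientMap_mk).isOpenMap)
        (Eventually.of_forall fun j => (QuotientAddGroup.isOpenQuotientMap_mk).surjective)
    have h2 : Φ = (Pi.map fun (j : Fin d) (y : ℝ) => (y : AddCircle (2 * s j))) ∘
        ⇑(PiLp.continuousLinearEquiv 2 ℝ (fun _ : Fin d => ℝ)).toHomeomorph := rfl
    rw [h2]
    exact h1.comp (Homeomorph.isOpenMap _)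
  have hΦq : Topology.IsQuotientMap Φ := hΦopen.isQuotientMap hΦcont hΦsurj
  -- characters
  set χ : (Fin d → ℤ) → C((∀ j : Fin d, AddCircle (2 * s j)), ℂ) := fun n =>
    ∏ j : Fin d,
      ContinuousMap.comp (fourier (n j)) ⟨fun y => y j, continuous_apply j⟩ with hχdef
  have hχ_apply : ∀ n y, χ n y = ∏ j, fourier (n j) (y j) := by
    intro n y
    rw [hχdef, ContinuousMap.prod_apply]
    rfl
  have hχ_mul : ∀ n m, χ n * χ m = χ (n + m) := by
    intro n m
    ext y
    simp only [ContinuousMap.mul_apply, hχ_apply, ← Finset.prod_mul_distrib]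
    exact Finset.prod_congr rfl fun j _ => (fourier_add).symm
  have hχ_one : χ 0 = 1 := by
    ext y
    simp [hχ_apply, fourier_zero]
  have hχ_star : ∀ n, star (χ n) = χ (-n) := by
    intro n
    ext y
    simp only [ContinuousMap.star_apply, hχ_apply, Pi.neg_apply, fourier_neg]
    rw [RCLike.star_def, map_prod]
  set R : Set C((∀ j : Fin d, AddCircle (2 * s j)), ℂ) := Set.range χ with hRdef
  set M : Submodule ℂ C((∀ j : Fin d, AddCircle (2 * s j)), ℂ) := Submodule.span ℂ R with hMdef
  have hRmul : R * R ⊆ R := by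
    rintro x ⟨a, ⟨n, rfl⟩, b, ⟨m, rfl⟩, rfl⟩
    exact ⟨n + m, (hχ_mul n m).symm⟩
  have hone : (1 : C((∀ j : Fin d, AddCircle (2 * s j)), ℂ)) ∈ M :=
    hχ_one ▸ Submodule.subset_span ⟨0, rfl⟩
  have hMmul : ∀ a ∈ M, ∀ b ∈ M, a * b ∈ M := by
    intro a ha b hb
    have h1 := Submodule.mul_mem_mul ha hb
    rw [hMdef, Submodule.span_mul_span] at h1
    exact Submodule.span_le.2 (hRmul.trans Submodule.subset_span) h1
  have hMstar : ∀ a ∈ M, star a ∈ M := by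
    intro a ha
    induction ha using Submodule.span_induction with
    | mem x h =>
      obtain ⟨n, rfl⟩ := h
      exact hχ_star n ▸ Submodule.subset_span ⟨-n, rfl⟩
    | zero => rw [star_zero]; exact M.zero_mem
    | add x y hx hy ihx ihy => rw [star_add]; exact M.add_mem ihx ihy
    | smul c x hx ihx => rw [star_smul]; exact M.smul_mem _ ihx
  set A : StarSubalgebra ℂ C((∀ j : Fin d, AddCircle (2 * s j)), ℂ) :=
    { carrier := M
      mul_mem' := fun ha hb => hMmul _ ha _ hb
      one_mem' := hone
      add_mem' := fun ha hb => M.add_mem ha hb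
      zero_mem' := M.zero_mem
      algebraMap_mem' := fun c => by
        have : algebraMap ℂ C((∀ j : Fin d, AddCircle (2 * s j)), ℂ) c = c • 1 :=
          Algebra.algebraMap_eq_smul_one c
        rw [this]
        exact M.smul_mem _ hone
      star_mem' := fun ha => hMstar _ ha } with hAdef
  have hsep : A.SeparatesPoints := by
    intro y z hyz
    obtain ⟨j, hj⟩ : ∃ j, y j ≠ z j := by
      by_contra hcon
      push_neg at hcon
      exact hyz (funext hcon)
    refine ⟨_, ⟨χ (Pi.single j 1), Submodule.subset_span ⟨_, rfl⟩, rfl⟩, ?_⟩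
    dsimp only
    have hval : ∀ w : ∀ j : Fin d, AddCircle (2 * s j),
        χ (Pi.single j 1) w = fourier 1 (w j) := by
      intro w
      rw [hχ_apply]
      rw [Finset.prod_eq_single j]
      · rw [Pi.single_eq_same]
      · intro i _ hi
        rw [Pi.single_eq_of_ne hi]
        exact fourier_zero
      · intro hmem
        exact absurd (Finset.mem_univ j) hmem
    rw [hval, hval]
    rw [fourier_one, fourier_one]
    intro hcon
    rw [Circle.coe_inj] at hcon
    exact hj (AddCircle.injective_toCircle (by linarith [hspos j]) hcon)
  have hdense : A.topologicalClosure = ⊤ :=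
    ContinuousMap.starSubalgebra_topologicalClosure_eq_top_of_separatesPoints A hsep
  -- the functional
  set L : C((∀ j : Fin d, AddCircle (2 * s j)), ℂ) → ℂ :=
    fun g => ∫ ξ : Ed d, g (Φ ξ) * W ξ with hLdef
  have hint : ∀ g : C((∀ j : Fin d, AddCircle (2 * s j)), ℂ),
      Integrable (fun ξ : Ed d => g (Φ ξ) * W ξ) volume := fun g =>
    hW.bdd_mul ((g.continuous.comp hΦcont).aestronglyMeasurable)
      (Eventually.of_forall fun ξ => g.norm_coe_le_norm _)
  have hLcont : Continuous L := by
    apply (LipschitzWith.of_dist_le_mul (K := (∫ ξ : Ed d, ‖W ξ‖).toNNReal) ?_).continuous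
    intro g₁ g₂
    rw [dist_eq_norm]
    have hsub : L g₁ - L g₂ = ∫ ξ : Ed d, (g₁ (Φ ξ) - g₂ (Φ ξ)) * W ξ := by
      rw [hLdef]
      simp only [sub_mul]
      rw [integral_sub (hint g₁) (hint g₂)]
    rw [hsub]
    calc ‖∫ ξ : Ed d, (g₁ (Φ ξ) - g₂ (Φ ξ)) * W ξ‖
        ≤ ∫ ξ : Ed d, ‖(g₁ (Φ ξ) - g₂ (Φ ξ)) * W ξ‖ := norm_integral_le_integral_norm _
      _ ≤ ∫ ξ : Ed d, dist g₁ g₂ * ‖W ξ‖ := by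
          apply integral_mono_of_nonneg (Eventually.of_forall fun ξ => norm_nonneg _)
            (hW.norm.const_mul _)
          filter_upwards with ξ
          rw [norm_mul]
          apply mul_le_mul_of_nonneg_right _ (norm_nonneg _)
          have h1 : ‖g₁ (Φ ξ) - g₂ (Φ ξ)‖ = dist (g₁ (Φ ξ)) (g₂ (Φ ξ)) := by
            rw [dist_eq_norm]
          rw [h1]
          exact ContinuousMap.dist_apply_le_dist _
      _ = (∫ ξ : Ed d, ‖W ξ‖).toNNReal * dist g₁ g₂ := by
          rw [integral_const_mul]
          rw [Real.coe_toNNReal _ (integral_nonneg fun ξ => norm_nonneg _)]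
          ring
  have hLchar : ∀ n : Fin d → ℤ, L (χ n) = 0 := by
    intro n
    rw [hLdef]
    rw [← hsamp n]
    apply integral_congr_ae
    filter_upwards with ξ
    rw [mul_comm]
    congr 1
    rw [hχ_apply]
    have hterm : ∀ j, fourier (n j) ((ξ j : AddCircle (2 * s j)))
        = Complex.exp (2 * ↑π * Complex.I * (n j) * (ξ j) / ((2 * s j : ℝ) : ℂ)) :=
      fun j => fourier_coe_apply
    simp only [hΦdef, hterm]
    rw [← Complex.exp_sum]
    congr 1
    push_cast
    rw [Finset.mul_sum, Finset.sum_mul]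
    apply Finset.sum_congr rfl
    intro j _
    ring
  have hLA : ∀ g ∈ M, L g = 0 := by
    intro g hg
    induction hg using Submodule.span_induction with
    | mem x h =>
      obtain ⟨n, rfl⟩ := h
      exact hLchar n
    | zero => simp [hLdef]
    | add x y hx hy ihx ihy =>
      rw [hLdef]
      simp only [ContinuousMap.add_apply, add_mul]
      rw [integral_add (hint x) (hint y)]
      have ihx' : (∫ ξ : Ed d, x (Φ ξ) * W ξ) = 0 := ihx
      have ihy' : (∫ ξ : Ed d, y (Φ ξ) * W ξ) = 0 := ihy
      rw [ihx', ihy', add_zero]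
    | smul c x hx ihx =>
      rw [hLdef]
      simp only [ContinuousMap.smul_apply, smul_eq_mul, mul_assoc]
      rw [integral_const_mul]
      have ihx' : (∫ ξ : Ed d, x (Φ ξ) * W ξ) = 0 := ihx
      rw [ihx', mul_zero]
  have hLall : ∀ g : C((∀ j : Fin d, AddCircle (2 * s j)), ℂ), L g = 0 := by
    intro g
    have hg : g ∈ closure (A : Set C((∀ j : Fin d, AddCircle (2 * s j)), ℂ)) := by
      have h1 : g ∈ A.topologicalClosure := by rw [hdense]; trivial
      exact h1
    have hclosed : IsClosed {g : C((∀ j : Fin d, AddCircle (2 * s j)), ℂ) | L g = 0} :=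
      isClosed_eq hLcont continuous_const
    exact closure_minimal (fun a ha => hLA a ha) hclosed hg
  -- test functions supported in B
  have htest : ∀ h : Ed d → ℂ, Continuous h → HasCompactSupport h → tsupport h ⊆ B →
      (∫ ξ : Ed d, W ξ * h ξ) = 0 := by
    intro h hhc hhcs hhsupp
    obtain ⟨δ, hδpos, hδ⟩ := hhcs.exists_thickening_subset_open hBopen hhsupp
    set ε : ℝ := δ / 2 with hεdef
    have hεpos : 0 < ε := by positivity
    have hmargin : ∀ ξ ∈ tsupport h, ∀ j, |ξ j| ≤ s j - ε := by
      intro ξ hξ j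
      by_contra hcon
      push_neg at hcon
      set σv : ℝ := if 0 ≤ ξ j then 1 else -1 with hσv
      set ξ' : Ed d := ξ + (ε * σv) • (EuclideanSpace.single j (1:ℝ)) with hξ'
      have hξ'j : ξ' j = ξ j + ε * σv := by
        simp [hξ', EuclideanSpace.single_apply]
      have hdist : dist ξ' ξ < δ := by
        rw [dist_eq_norm]
        have : ξ' - ξ = (ε * σv) • (EuclideanSpace.single j (1:ℝ)) := by
          rw [hξ']; abel
        rw [this, norm_smul, EuclideanSpace.norm_single]
        have hσvabs : |σv| = 1 := by
          rw [hσv]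
          split_ifs <;> simp
        rw [Real.norm_eq_abs, abs_mul, hσvabs, abs_of_pos hεpos]
        simp only [norm_one, mul_one]
        rw [hεdef]
        linarith
      have hξ'B : ξ' ∈ B := by
        apply hδ
        rw [Metric.mem_thickening_iff]
        exact ⟨ξ, hξ, hdist⟩
      have hlt : |ξ' j| < s j := hξ'B j
      have habs : |ξ' j| = |ξ j| + ε := by
        rw [hξ'j, hσv]
        split_ifs with hsgn
        · rw [mul_one, abs_of_nonneg (by linarith), abs_of_nonneg hsgn]
        · push_neg at hsgn
          rw [mul_neg_one, abs_of_nonpos (by linarith), abs_of_neg hsgn]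
          ring
      rw [habs] at hlt
      linarith
    -- representative map
    set rep : (∀ j : Fin d, AddCircle (2 * s j)) → Ed d := fun y =>
      (WithLp.equiv 2 (Fin d → ℝ)).symm
        (fun j => ((AddCircle.equivIoc (2 * s j) (-(s j)) (y j) : Set.Ioc _ _) : ℝ)) with hrepdef
    have hrep_mem : ∀ y j, rep y j ∈ Set.Ioc (-(s j)) (s j) := by
      intro y j
      have h1 := (AddCircle.equivIoc (2 * s j) (-(s j)) (y j)).2
      have h2 : rep y j = ((AddCircle.equivIoc (2 * s j) (-(s j)) (y j) : Set.Ioc _ _) : ℝ) := rfl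
      rw [h2]
      exact ⟨h1.1, by have := h1.2; linarith⟩
    have hrep_coe : ∀ y j, ((rep y j : ℝ) : AddCircle (2 * s j)) = y j := by
      intro y j
      exact (AddCircle.equivIoc (2 * s j) (-(s j))).symm_apply_apply (y j)
    have hmod : ∀ (j : Fin d) (a b : ℝ), ((a : AddCircle (2 * s j)) = (b : ℝ)) →
        ∃ m : ℤ, a - b = m * (2 * s j) := by
      intro j a b hab
      rw [QuotientAddGroup.eq_iff_sub_mem] at hab
      obtain ⟨m, hm⟩ := (AddSubgroup.mem_zmultiples_iff).1 hab
      exact ⟨m, by rw [← hm, zsmul_eq_mul]⟩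
    set g0 : (∀ j : Fin d, AddCircle (2 * s j)) → ℂ := fun y => h (rep y) with hg0def
    -- pointwise identity
    have hkey : ∀ ξ : Ed d, g0 (Φ ξ) * W ξ = W ξ * h ξ := by
      intro ξ
      by_cases hWξ : W ξ = 0
      · rw [hWξ, mul_zero, zero_mul]
      · have hbox : ∀ j, |ξ j| ≤ 1 := by
          intro j
          by_contra hcon
          push_neg at hcon
          exact hWξ (hWs ξ ⟨j, hcon⟩)
        have hcases : ∀ j, rep (Φ ξ) j = ξ j ∨ (ξ j = -(s j) ∧ rep (Φ ξ) j = s j) := by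
          intro j
          obtain ⟨m, hm⟩ := hmod j (rep (Φ ξ) j) (ξ j) (by rw [hrep_coe])
          have := rep_cases (hspos j) (le_trans (hbox j) (hs j)) (hrep_mem (Φ ξ) j) m hm
          tauto
        by_cases hall : ∀ j, rep (Φ ξ) j = ξ j
        · have hrx : rep (Φ ξ) = ξ := WithLp.ofLp_injective 2 (funext hall)
          show h (rep (Φ ξ)) * W ξ = W ξ * h ξ
          rw [hrx, mul_comm]
        · push_neg at hall
          obtain ⟨j, hj⟩ := hall
          have hcj := (hcases j).resolve_left hj
          have hξ0 : h ξ = 0 := by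
            apply image_eq_zero_of_notMem_tsupport
            intro hmem
            have := hmargin ξ hmem j
            rw [hcj.1] at this
            rw [abs_neg, abs_of_pos (hspos j)] at this
            linarith
          have hr0 : h (rep (Φ ξ)) = 0 := by
            apply image_eq_zero_of_notMem_tsupport
            intro hmem
            have := hmargin _ hmem j
            rw [hcj.2, abs_of_pos (hspos j)] at this
            linarith
          show h (rep (Φ ξ)) * W ξ = W ξ * h ξ
          rw [hr0, hξ0, mul_zero, zero_mul]
    -- continuity of g0
    have hg0cont : Continuous g0 := by
      rw [hΦq.continuous_iff]
      rw [continuous_iff_continuousAt]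
      intro ξ0
      by_cases hseam : ∀ j, (ξ0 j : AddCircle (2 * s j)) ≠ ((-(s j) : ℝ) : AddCircle (2 * s j))
      · apply hhc.continuousAt.comp
        have hpi : ContinuousAt (fun ξ : Ed d =>
            (fun j => ((AddCircle.equivIoc (2 * s j) (-(s j)) ((ξ j : AddCircle (2 * s j)))
              : Set.Ioc _ _) : ℝ)) : Ed d → (Fin d → ℝ)) ξ0 := by
          rw [continuousAt_pi]
          intro j
          have c1 : ContinuousAt (fun ξ : Ed d => (ξ j : AddCircle (2 * s j))) ξ0 :=
            ((QuotientAddGroup.isOpenQuotientMap_mk).continuous.comp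
              (EuclideanSpace.proj j).continuous).continuousAt
          have c2 : ContinuousAt (AddCircle.equivIoc (2 * s j) (-(s j)))
              ((ξ0 j : AddCircle (2 * s j))) :=
            AddCircle.continuousAt_equivIoc _ _ (hseam j)
          show ContinuousAt ((fun z : AddCircle (2 * s j) =>
            ((AddCircle.equivIoc (2 * s j) (-(s j)) z : Set.Ioc _ _) : ℝ)) ∘
              (fun ξ : Ed d => (ξ j : AddCircle (2 * s j)))) ξ0
          have cA : ContinuousAt (fun z : AddCircle (2 * s j) =>
              ((AddCircle.equivIoc (2 * s j) (-(s j)) z : Set.Ioc _ _) : ℝ))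
              ((fun ξ : Ed d => (ξ j : AddCircle (2 * s j))) ξ0) :=
            continuous_subtype_val.continuousAt.comp c2
          exact ContinuousAt.comp (x := ξ0)
            (f := fun ξ : Ed d => (ξ j : AddCircle (2 * s j))) cA c1
        exact ((PiLp.continuousLinearEquiv 2 ℝ
          (fun _ : Fin d => ℝ)).symm.toHomeomorph.continuous.continuousAt).comp hpi
      · push_neg at hseam
        obtain ⟨j0, hj0⟩ := hseam
        set ε' : ℝ := min ε (s j0) with hε'def
        have hε'pos : 0 < ε' := lt_min hεpos (hspos j0)
        have hev : ∀ ξ : Ed d, |ξ j0 - ξ0 j0| < ε' → (g0 ∘ Φ) ξ = 0 := by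
          intro ξ hξnear
          obtain ⟨k, hk⟩ := hmod j0 (ξ0 j0) (-(s j0)) hj0
          obtain ⟨m, hm⟩ := hmod j0 (rep (Φ ξ) j0) (ξ j0) (by rw [hrep_coe])
          set δ0 : ℝ := ξ j0 - ξ0 j0 with hδ0
          have hq : rep (Φ ξ) j0 - (-(s j0) + δ0) = ((m + k : ℤ) : ℝ) * (2 * s j0) := by
            push_cast
            have : ξ j0 = ξ0 j0 + δ0 := by rw [hδ0]; ring
            nlinarith [hm, hk]
          have hbound := seam_bound (hspos j0) (hrep_mem (Φ ξ) j0) hξnear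
            (min_le_right _ _) (m + k) hq
          simp only [Function.comp_apply, hg0def]
          apply image_eq_zero_of_notMem_tsupport
          intro hmem
          have := hmargin _ hmem j0
          have hε'ε : ε' ≤ ε := min_le_left _ _
          linarith
        have hnbhd : {ξ : Ed d | |ξ j0 - ξ0 j0| < ε'} ∈ 𝓝 ξ0 := by
          have hopen : IsOpen {ξ : Ed d | |ξ j0 - ξ0 j0| < ε'} := by
            have : {ξ : Ed d | |ξ j0 - ξ0 j0| < ε'}
                = (fun ξ : Ed d => ξ j0) ⁻¹' (Metric.ball (ξ0 j0) ε') := by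
              ext ξ
              simp [Real.dist_eq]
            rw [this]
            exact Metric.isOpen_ball.preimage (EuclideanSpace.proj j0).continuous
          exact hopen.mem_nhds (by simp [hε'pos])
        have : (g0 ∘ Φ) =ᶠ[𝓝 ξ0] fun _ => 0 := by
          filter_upwards [hnbhd] with ξ hξ
          exact hev ξ hξ
        exact this.continuousAt
    -- conclude
    have h0 := hLall ⟨g0, hg0cont⟩
    rw [hLdef] at h0
    rw [← h0]
    apply integral_congr_ae
    filter_upwards with ξ
    exact (hkey ξ).symm
  -- apply the distribution lemma
  have hae1 : ∀ᵐ ξ : Ed d, ξ ∈ B → W ξ = 0 := by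
    apply hBopen.ae_eq_zero_of_integral_contDiff_smul_eq_zero
    · exact (hW.locallyIntegrable).locallyIntegrableOn _
    · intro g hg hgc hgs
      have hcoe : Continuous (fun ξ : Ed d => ((g ξ : ℝ) : ℂ)) :=
        Complex.continuous_ofReal.comp hg.continuous
      have hsupp : Function.support (fun ξ : Ed d => ((g ξ : ℝ) : ℂ)) ⊆ Function.support g := by
        intro ξ hξ
        simp only [Function.mem_support] at hξ ⊢
        intro hcon
        exact hξ (by rw [hcon]; simp)
      have htsupp : tsupport (fun ξ : Ed d => ((g ξ : ℝ) : ℂ)) ⊆ tsupport g :=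
        closure_mono hsupp
      have hcompact : HasCompactSupport (fun ξ : Ed d => ((g ξ : ℝ) : ℂ)) :=
        HasCompactSupport.of_support_subset_isCompact hgc (hsupp.trans subset_closure)
      have hh := htest (fun ξ => ((g ξ : ℝ) : ℂ)) hcoe hcompact (htsupp.trans hgs)
      rw [← hh]
      apply integral_congr_ae
      filter_upwards with ξ
      rw [Complex.real_smul, mul_comm]
  have hnull : volume {ξ : Ed d | (∀ j, |ξ j| ≤ 1) ∧ ξ ∉ B} = 0 := by
    refine measure_mono_null
      (?_ : _ ⊆ ⋃ j, ({ξ : Ed d | ξ j = s j} ∪ {ξ : Ed d | ξ j = -(s j)})) ?_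
    · rintro ξ ⟨hbox, hnB⟩
      simp only [hBdef, Set.mem_setOf_eq, not_forall, not_lt] at hnB
      obtain ⟨j, hj⟩ := hnB
      have habs : |ξ j| = s j := le_antisymm (le_trans (hbox j) (hs j)) hj
      rw [Set.mem_iUnion]
      refine ⟨j, ?_⟩
      rcases abs_eq (le_of_lt (hspos j)) |>.1 habs with h | h
      · exact Or.inl h
      · exact Or.inr h
    · apply measure_iUnion_null
      intro j
      apply measure_union_null <;> exact hyperplane_null j _
  filter_upwards [hae1, measure_eq_zero_iff_ae_notMem.1 hnull] with ξ h1 h2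
  by_cases hB' : ξ ∈ B
  · exact h1 hB'
  · by_cases hbox : ∀ j, |ξ j| ≤ 1
    · exact absurd ⟨hbox, hB'⟩ h2
    · push_neg at hbox
      obtain ⟨j, hj⟩ := hbox
      exact hWs ξ ⟨j, hj⟩

lemma fourierInv_line_entire (w : Ed d → ℂ) (hw : Integrable w volume)
    (hws : ∀ ξ : Ed d, (∃ j, (1:ℝ)/2 < |ξ j|) → w ξ = 0) (x e : Ed d) :
    ∃ F : ℂ → ℂ, Differentiable ℂ F ∧ ∀ t : ℝ, F t = 𝓕⁻ w (x + t • e) := by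
  set C : ℝ := Real.sqrt d * ‖e‖ + 1 with hC
  have hCpos : 0 < C := by positivity
  have hb : ∀ ξ : Ed d, w ξ ≠ 0 → |(inner ℝ ξ e : ℝ)| ≤ C := by
    intro ξ hξ
    have hbox : ∀ j, |ξ j| ≤ 1 := by
      intro j; by_contra h; push_neg at h
      exact hξ (hws ξ ⟨j, by linarith⟩)
    have hnorm : ‖ξ‖ ≤ Real.sqrt d := by
      rw [EuclideanSpace.norm_eq]
      apply Real.sqrt_le_sqrt
      calc (∑ i, ‖ξ i‖ ^ 2) ≤ ∑ _i : Fin d, (1:ℝ) := by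
            apply Finset.sum_le_sum
            intro i _
            have := hbox i
            have h0 : ‖ξ i‖ = |ξ i| := rfl
            rw [h0]
            nlinarith [abs_nonneg (ξ i)]
        _ = d := by simp
    calc |(inner ℝ ξ e : ℝ)| ≤ ‖ξ‖ * ‖e‖ := abs_real_inner_le_norm ξ e
      _ ≤ Real.sqrt d * ‖e‖ := mul_le_mul_of_nonneg_right hnorm (norm_nonneg e)
      _ ≤ C := by rw [hC]; linarith
  refine ⟨fun t => ∫ ξ : Ed d, w ξ *
      Complex.exp (2 * (π:ℂ) * Complex.I *
        (((inner ℝ ξ x : ℝ) : ℂ) + t * ((inner ℝ ξ e : ℝ) : ℂ))), ?_, ?_⟩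
  · intro t₀
    set B : ℝ := 2 * π * C * Real.exp (2 * π * C * (|t₀.im| + 1)) with hB
    have hmeas : ∀ t : ℂ, AEStronglyMeasurable (fun ξ : Ed d => w ξ *
        Complex.exp (2 * (π:ℂ) * Complex.I *
          (((inner ℝ ξ x : ℝ) : ℂ) + t * ((inner ℝ ξ e : ℝ) : ℂ)))) volume := by
      intro t
      apply hw.aestronglyMeasurable.mul
      apply Continuous.aestronglyMeasurable
      apply Complex.continuous_exp.comp
      apply Continuous.mul continuous_const
      apply Continuous.add
      · exact Complex.continuous_ofReal.comp (continuous_id.inner continuous_const)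
      · exact continuous_const.mul
          (Complex.continuous_ofReal.comp (continuous_id.inner continuous_const))
    have hexp_norm : ∀ (t : ℂ) (ξ : Ed d), ‖Complex.exp (2 * (π:ℂ) * Complex.I *
        (((inner ℝ ξ x : ℝ) : ℂ) + t * ((inner ℝ ξ e : ℝ) : ℂ)))‖
        = Real.exp (-(2 * π * (t.im * (inner ℝ ξ e : ℝ)))) := by
      intro t ξ
      rw [Complex.norm_exp]
      congr 1
      have : (2 * (π:ℂ) * Complex.I *
          (((inner ℝ ξ x : ℝ) : ℂ) + t * ((inner ℝ ξ e : ℝ) : ℂ))).re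
          = -(2 * π * (t.im * (inner ℝ ξ e : ℝ))) := by
        simp [Complex.mul_re, Complex.mul_im, Complex.add_re, Complex.add_im,
          Complex.I_re, Complex.I_im, Complex.ofReal_re, Complex.ofReal_im] <;> ring
      rw [this]
    have hexp_bound : ∀ (t : ℂ), t ∈ Metric.ball t₀ 1 → ∀ ξ : Ed d, w ξ ≠ 0 →
        ‖Complex.exp (2 * (π:ℂ) * Complex.I *
          (((inner ℝ ξ x : ℝ) : ℂ) + t * ((inner ℝ ξ e : ℝ) : ℂ)))‖
          ≤ Real.exp (2 * π * C * (|t₀.im| + 1)) := by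
      intro t ht ξ hξ
      rw [hexp_norm]
      apply Real.exp_le_exp.2
      have him : |t.im| ≤ |t₀.im| + 1 := by
        have h1 : |t.im - t₀.im| ≤ ‖t - t₀‖ := by
          rw [← Complex.sub_im]; exact Complex.abs_im_le_norm _
        have h2 : ‖t - t₀‖ < 1 := by
          rw [← Complex.dist_eq]; exact ht
        have := abs_sub_abs_le_abs_sub t.im t₀.im
        linarith
      have hBe := hb ξ hξ
      have h3 : |(-(2 * π * (t.im * (inner ℝ ξ e : ℝ))))| ≤ 2 * π * C * (|t₀.im| + 1) := by
        rw [abs_neg, abs_mul, abs_mul, abs_mul]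
        have h2' : |(2:ℝ)| = 2 := by norm_num
        have hππ : |π| = π := abs_of_pos Real.pi_pos
        rw [h2', hππ]
        have h4 : |t.im| * |(inner ℝ ξ e : ℝ)| ≤ (|t₀.im| + 1) * C :=
          mul_le_mul him hBe (abs_nonneg _) (by positivity)
        nlinarith [Real.pi_pos]
      calc -(2 * π * (t.im * (inner ℝ ξ e : ℝ)))
          ≤ |(-(2 * π * (t.im * (inner ℝ ξ e : ℝ))))| := le_abs_self _
        _ ≤ 2 * π * C * (|t₀.im| + 1) := h3
    have key := hasDerivAt_integral_of_dominated_loc_of_deriv_le (μ := volume)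
      (F := fun (t : ℂ) (ξ : Ed d) => w ξ *
        Complex.exp (2 * (π:ℂ) * Complex.I *
          (((inner ℝ ξ x : ℝ) : ℂ) + t * ((inner ℝ ξ e : ℝ) : ℂ))))
      (F' := fun (t : ℂ) (ξ : Ed d) => w ξ *
        (Complex.exp (2 * (π:ℂ) * Complex.I *
          (((inner ℝ ξ x : ℝ) : ℂ) + t * ((inner ℝ ξ e : ℝ) : ℂ)))
          * (2 * (π:ℂ) * Complex.I * ((inner ℝ ξ e : ℝ) : ℂ))))
      (x₀ := t₀) (bound := fun ξ => ‖w ξ‖ * B) (Metric.ball_mem_nhds t₀ one_pos)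
      (Eventually.of_forall fun t => hmeas t) ?_ ?_ ?_ ?_ ?_
    · exact key.2.differentiableAt
    · -- Integrable (F t₀)
      apply Integrable.mono' (hw.norm.mul_const (Real.exp (2 * π * C * (|t₀.im| + 1))))
        (hmeas t₀)
      filter_upwards with ξ
      rw [norm_mul]
      by_cases hξ : w ξ = 0
      · simp [hξ]
      · have := hexp_bound t₀ (Metric.mem_ball_self one_pos) ξ hξ
        exact mul_le_mul_of_nonneg_left this (norm_nonneg _)
    · -- AESM F' t₀
      apply AEStronglyMeasurable.mul hw.aestronglyMeasurable
      apply Continuous.aestronglyMeasurable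
      apply Continuous.mul
      · apply Complex.continuous_exp.comp
        exact continuous_const.mul
          ((Complex.continuous_ofReal.comp (continuous_id.inner continuous_const)).add
            (continuous_const.mul
              (Complex.continuous_ofReal.comp (continuous_id.inner continuous_const))))
      · exact continuous_const.mul
          (Complex.continuous_ofReal.comp (continuous_id.inner continuous_const))
    · -- bound on F'
      filter_upwards with ξ
      intro t ht
      rw [norm_mul]
      by_cases hξ : w ξ = 0
      · simp [hξ]
      · rw [norm_mul]
        have h1 := hexp_bound t ht ξ hξ
        have h2 : ‖2 * (π:ℂ) * Complex.I * ((inner ℝ ξ e : ℝ) : ℂ)‖ ≤ 2 * π * C := by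
          simp only [norm_mul, Complex.norm_I, Complex.norm_real, Real.norm_eq_abs,
            Complex.norm_two, mul_one]
          have h5 : |π| = π := abs_of_pos Real.pi_pos
          rw [h5]
          have := hb ξ hξ
          nlinarith [Real.pi_pos, abs_nonneg ((inner ℝ ξ e : ℝ) : ℝ)]
        have h6 := mul_le_mul h1 h2 (norm_nonneg _) (Real.exp_nonneg _)
        have h7 := mul_le_mul_of_nonneg_left h6 (norm_nonneg (w ξ))
        refine le_trans h7 (le_of_eq ?_)
        rw [hB]; ring
    · -- Integrable bound
      exact hw.norm.mul_const B
    · -- HasDerivAt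
      filter_upwards with ξ
      intro t _
      have h1 : HasDerivAt (fun t : ℂ => ((inner ℝ ξ x : ℝ) : ℂ) + t * ((inner ℝ ξ e : ℝ) : ℂ))
          ((inner ℝ ξ e : ℝ) : ℂ) t :=
        (hasDerivAt_mul_const _).const_add _
      have h2 := h1.const_mul (2 * (π:ℂ) * Complex.I)
      have h3 := h2.cexp
      have h4 := h3.const_mul (w ξ)
      convert h4 using 1 <;> ring
  · intro t
    rw [Real.fourierInv_eq']
    apply integral_congr_ae
    filter_upwards with ξ
    rw [smul_eq_mul, mul_comm]
    congr 1
    have hip : (inner ℝ ξ (x + t • e) : ℝ) = (inner ℝ ξ x : ℝ) + t * (inner ℝ ξ e : ℝ) := by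
      rw [inner_add_right, real_inner_smul_right]
    rw [hip]
    push_cast
    ring

end StmtAux

open StmtAux in
theorem stmt1 (d : ℕ) (u v : Ed d → ℂ)
    (s : Fin d → ℝ) (hs : ∀ j, 1 ≤ s j)
    (hu2 : MemLp u 2 volume) (hv2 : MemLp v 2 volume)
    (hubl : ∃ U : Ed d → ℂ, Integrable U ∧
      (∀ ξ : Ed d, (∃ j, (1:ℝ)/2 < |ξ j|) → U ξ = 0) ∧ ∀ x, u x = 𝓕⁻ U x)
    (hvbl : ∃ V : Ed d → ℂ, Integrable V ∧
      (∀ ξ : Ed d, (∃ j, (1:ℝ)/2 < |ξ j|) → V ξ = 0) ∧ ∀ x, v x = 𝓕⁻ V x)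
    (hw : ∀ n : Fin d → ℤ, u (latticePt d s n) * v (latticePt d s n) = 0) :
    u = 0 ∨ v = 0 := by
  obtain ⟨U, hU1, hU2, hU3⟩ := hubl
  obtain ⟨V, hV1, hV2, hV3⟩ := hvbl
  set W : Ed d → ℂ := fun ξ => ∫ η, U η * V (ξ - η) with hWdef
  have hWi : Integrable W volume := conv_integrable U V hU1 hV1
  have hWsupp : ∀ ξ : Ed d, (∃ j, (1:ℝ) < |ξ j|) → W ξ = 0 := conv_support U V hU2 hV2
  have key : ∀ x, u x * v x = 𝓕⁻ W x := by
    intro x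
    rw [hU3, hV3, conv_fourierInv U V hU1 hV1]
  have hFW : ∀ x : Ed d, 𝓕⁻ W x
      = ∫ ξ : Ed d, W ξ * Complex.exp ((2 * π * (inner ℝ ξ x : ℝ) : ℝ) * Complex.I) := by
    intro x
    rw [Real.fourierInv_eq]
    congr 1
    ext ξ
    rw [Circle.smul_def, Real.fourierChar_apply, smul_eq_mul, mul_comm]
  have hinner : ∀ (n : Fin d → ℤ) (ξ : Ed d),
      (inner ℝ ξ (latticePt d s n) : ℝ) = ∑ j, ξ j * ((n j : ℝ) / (2 * s j)) := by
    intro n ξ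
    rw [PiLp.inner_apply]
    exact Finset.sum_congr rfl fun j _ => by simp [latticePt, RCLike.inner_apply, mul_comm]
  have hae : ∀ᵐ ξ : Ed d, W ξ = 0 := by
    refine sampled_zero s hs W hWi hWsupp (fun n => ?_)
    have h0 := hw n
    rw [key, hFW] at h0
    simp_rw [hinner n] at h0
    exact h0
  have huv : ∀ x, u x * v x = 0 := by
    intro x
    rw [key, Real.fourierInv_eq]
    rw [integral_congr_ae (g := fun _ => (0:ℂ)) (hae.mono fun ξ h => by rw [h, smul_zero])]
    exact integral_zero _ _
  by_cases hA : ∀ x, u x = 0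
  · exact Or.inl (funext hA)
  · push_neg at hA
    obtain ⟨a, ha⟩ := hA
    refine Or.inr (funext fun b => ?_)
    obtain ⟨F, hFdiff, hFeq⟩ := fourierInv_line_entire U hU1 hU2 a (b - a)
    obtain ⟨G, hGdiff, hGeq⟩ := fourierInv_line_entire V hV1 hV2 a (b - a)
    have hFu : ∀ t : ℝ, F t = u (a + t • (b - a)) := fun t => by rw [hFeq, hU3]
    have hGv : ∀ t : ℝ, G t = v (a + t • (b - a)) := fun t => by rw [hGeq, hV3]
    have hFG : ∀ t : ℝ, F t * G t = 0 := fun t => by rw [hFu, hGv]; exact huv _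
    have hF0 : F 0 ≠ 0 := by
      have : F ((0:ℝ):ℂ) = u a := by rw [hFu]; norm_num
      rw [Complex.ofReal_zero] at this
      rw [this]; exact ha
    have hne : ∀ᶠ z in 𝓝 (0:ℂ), F z ≠ 0 :=
      (hFdiff.continuous.continuousAt).eventually_ne hF0
    obtain ⟨δ, hδpos, hδ⟩ := Metric.eventually_nhds_iff.1 hne
    have hGzero : ∀ n : ℕ, G ((δ / (n+2) : ℝ) : ℂ) = 0 := by
      intro n
      have hpos : (0:ℝ) < δ / (n+2) := by positivity
      have hlt : dist ((δ / (n+2) : ℝ) : ℂ) 0 < δ := by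
        rw [Complex.dist_eq, sub_zero]
        rw [Complex.norm_real, Real.norm_eq_abs, abs_of_pos hpos]
        rw [div_lt_iff₀ (by positivity)]
        nlinarith
      have hFne := hδ hlt
      have := hFG (δ / (n+2))
      exact (mul_eq_zero.1 this).resolve_left hFne
    have hGanal : AnalyticOnNhd ℂ G Set.univ :=
      (hGdiff.differentiableOn).analyticOnNhd isOpen_univ
    have hfreq : ∃ᶠ z in 𝓝[≠] (0:ℂ), G z = 0 := by
      have htend : Tendsto (fun n : ℕ => ((δ / (n+2) : ℝ) : ℂ)) atTop (𝓝[≠] (0:ℂ)) := by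
        apply tendsto_nhdsWithin_of_tendsto_nhds_of_eventually_within
        · have : Tendsto (fun n : ℕ => (δ / (n+2) : ℝ)) atTop (𝓝 0) := by
            apply Tendsto.div_atTop tendsto_const_nhds
            exact tendsto_atTop_add_const_right _ _ tendsto_natCast_atTop_atTop
          have := (Complex.continuous_ofReal.tendsto 0).comp this
          simp only [Function.comp_def, Complex.ofReal_zero] at this
          exact this
        · filter_upwards with n
          simp only [Set.mem_compl_iff, Set.mem_singleton_iff]
          intro h
          have : (δ / (n+2) : ℝ) = 0 := by exact_mod_cast h
          have hpos : (0:ℝ) < δ / (n+2) := by positivity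
          linarith
      exact htend.frequently ((Eventually.of_forall hGzero).frequently)
    have hG0 : Set.EqOn G 0 Set.univ :=
      hGanal.eqOn_zero_of_preconnected_of_frequently_eq_zero isPreconnected_univ
        (Set.mem_univ _) hfreq
    have : G ((1:ℝ):ℂ) = 0 := hG0 (Set.mem_univ _)
    rw [hGv 1] at this
    rw [hV3 b, ← hV3]
    rw [one_smul, add_sub_cancel] at this
    exact this
end
end

section
/- Suppose there exist real-valued band-limited $h_1, h_2 \in L^2(\mathbb{R})$ with $\mathrm{supp}\,\hat{h_j} \subseteq [-1/2,1/2]$, $h_1 \neq \pm h_2$, but $|h_1((2s)^{-1}\mathbb{Z})| = |h_2((2s)^{-1}\mathbb{Z})|$ for some $0 < s < 1$. Then for any $d > 1$, any index $i \in \{1,\dots,d\}$, and any nonzero $f \in L^2(\mathbb{R}^{d-1})$ with $\mathrm{supp}\,\hat{f} \subseteq [-1/2,1/2]^{d-1}$, the functions $g_j(x) = f(x_1,\dots,x_{i-1},x_{i+1},\dots,x_d)\,h_j(x_i)$ satisfy: $\mathrm{supp}\,\hat{g_j} \subseteq [-1/2,1/2]^d$, $|g_1| = |g_2|$ on the lattice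 $D[2\mathbf{s}]^{-1}\mathbb{Z}^d$ with $s_i = s$ and $s_k = 1$ for $k \neq i$, yet $g_1 \neq \pm g_2$. -/
open MeasureTheory Real Filter
open scoped FourierTransform ENNReal Topology

noncomputable section

section Aux

open scoped RealInnerProductSpace

lemma euclid_integral_eq {n : ℕ} (φ : Ed n → ℂ) :
    ∫ x : Ed n, φ x = ∫ y : Fin n → ℝ, φ ((WithLp.equiv 2 (Fin n → ℝ)).symm y) := by
  rw [← ((EuclideanSpace.volume_preserving_symm_measurableEquiv_toLp (Fin n)).symm).integral_comp
      (MeasurableEquiv.measurableEmbedding _)]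
  rfl

lemma inner_euclid {n : ℕ} (x y : Ed n) : ⟪x, y⟫ = ∑ j, x j * y j := by
  simp [PiLp.inner_apply, RCLike.inner_apply, mul_comm]

lemma fourier_factor {d : ℕ} (i : Fin (d + 1)) (f : Ed d → ℂ) (h : ℝ → ℂ) (ξ : Ed (d + 1)) :
    𝓕 (fun x : Ed (d + 1) =>
        f ((WithLp.equiv 2 (Fin d → ℝ)).symm fun k => x (i.succAbove k)) * h (x i)) ξ
      = 𝓕 h (ξ i) *
        𝓕 f ((WithLp.equiv 2 (Fin d → ℝ)).symm fun k => ξ (i.succAbove k)) := by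
  set A : ℝ → ℂ := fun t => (𝐞 (-(t * ξ i)) : Circle) • h t with hA
  set B : (Fin d → ℝ) → ℂ := fun y =>
    (𝐞 (-(∑ k, y k * ξ (i.succAbove k))) : Circle) •
      f ((WithLp.equiv 2 (Fin d → ℝ)).symm y) with hB
  rw [Real.fourier_eq, euclid_integral_eq, volume_pi,
    ← ((measurePreserving_piFinSuccAbove (fun _ : Fin (d+1) => (volume : Measure ℝ)) i).symm).integral_comp (MeasurableEquiv.measurableEmbedding _)]
  have key : ∀ z : ℝ × (Fin d → ℝ),
      𝐞 (-⟪((WithLp.equiv 2 (Fin (d+1) → ℝ)).symm ((MeasurableEquiv.piFinSuccAbove (fun _ => ℝ) i).symm z) : Ed (d+1)), ξ⟫) •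
        (f ((WithLp.equiv 2 (Fin d → ℝ)).symm fun k =>
            (WithLp.equiv 2 (Fin (d+1) → ℝ)).symm
              ((MeasurableEquiv.piFinSuccAbove (fun _ => ℝ) i).symm z) (i.succAbove k)) *
          h ((WithLp.equiv 2 (Fin (d+1) → ℝ)).symm
              ((MeasurableEquiv.piFinSuccAbove (fun _ => ℝ) i).symm z) i))
      = A z.1 * B z.2 := by
    intro z
    have hins : ((MeasurableEquiv.piFinSuccAbove (fun _ : Fin (d+1) => ℝ) i).symm z)
        = i.insertNth z.1 z.2 := rfl
    rw [hins]
    have hinner : ⟪((WithLp.equiv 2 (Fin (d+1) → ℝ)).symm (i.insertNth z.1 z.2) : Ed (d+1)), ξ⟫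
        = z.1 * ξ i + ∑ k, z.2 k * ξ (i.succAbove k) := by
      rw [inner_euclid, Fin.sum_univ_succAbove (fun j => _ * ξ j) i]
      simp [WithLp.equiv_symm_apply, PiLp.toLp_apply]
    rw [hinner]
    simp only [hA, hB, WithLp.equiv_symm_apply, PiLp.toLp_apply, Fin.insertNth_apply_same,
      Fin.insertNth_apply_succAbove, neg_add, AddChar.map_add_eq_mul, Circle.smul_def,
      Circle.coe_mul, smul_eq_mul]
    ring
  rw [integral_congr_ae (Eventually.of_forall key), integral_prod_mul]
  have hAint : ∫ t, A t = 𝓕 h (ξ i) := by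
    rw [Real.fourier_eq]
    refine integral_congr_ae (Eventually.of_forall fun t => ?_)
    simp [hA, RCLike.inner_apply, mul_comm]
  have hBint : (∫ y, B y ∂(Measure.pi fun _ : Fin d => (volume : Measure ℝ)))
      = 𝓕 f ((WithLp.equiv 2 (Fin d → ℝ)).symm fun k => ξ (i.succAbove k)) := by
    rw [← volume_pi, Real.fourier_eq, euclid_integral_eq]
    refine (integral_congr_ae (Eventually.of_forall fun y => ?_)).symm
    simp only [hB]
    have : ⟪((WithLp.equiv 2 (Fin d → ℝ)).symm y : Ed d),
        ((WithLp.equiv 2 (Fin d → ℝ)).symm fun k => ξ (i.succAbove k) : Ed d)⟫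
        = ∑ k, y k * ξ (i.succAbove k) := by
      rw [inner_euclid]; simp [WithLp.equiv_symm_apply, PiLp.toLp_apply]
    rw [this]
  rw [hAint, hBint]

variable {V : Type*} [NormedAddCommGroup V] [InnerProductSpace ℝ V] [FiniteDimensional ℝ V]
  [MeasurableSpace V] [BorelSpace V]

lemma bandlimit_fourier_zero (h H : V → ℂ) (hHi : Integrable H) (hInt : Integrable h)
    (hrep : ∀ x, h x = 𝓕⁻ H x) {U : Set V} (hU : IsOpen U) (hU0 : ∀ ξ ∈ U, H ξ = 0)
    {v : V} (hv : v ∈ U) : 𝓕 h v = 0 := by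
  have hh : h = 𝓕⁻ H := funext hrep
  have hFH : 𝓕 H = fun x => h (-x) := by
    funext x
    rw [hh]
    rw [show (𝓕⁻ H : V → ℂ) (-x) = 𝓕 H (-(-x)) from Real.fourierInv_eq_fourier_neg H (-x),
      neg_neg]
  have hFHi : Integrable (𝓕 H) := by
    rw [hFH]
    exact ((Measure.measurePreserving_neg (volume : Measure V)).integrable_comp_emb
      (MeasurableEquiv.neg V).measurableEmbedding (g := h)).2 hInt
  have hc : ContinuousAt H v := by
    refine Filter.EventuallyEq.continuousAt (y := 0) ?_
    filter_upwards [hU.mem_nhds hv] with ξ hξ using hU0 ξ hξ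
  have := hHi.fourier_fourierInv_eq hFHi hc
  rw [hh, this, hU0 v hv]

lemma cont_eval {n : ℕ} (j : Fin n) : Continuous fun ξ : Ed n => ξ j := by
  exact (EuclideanSpace.proj j).continuous

end Aux

theorem stmt4 (d : ℕ) (hd : 1 ≤ d) (i : Fin (d + 1))
    (h₁ h₂ : ℝ → ℂ)
    (hr1 : ∀ x, (h₁ x).im = 0) (hr2 : ∀ x, (h₂ x).im = 0)
    (hi1 : Integrable h₁) (hi2 : Integrable h₂)
    (hL1 : MemLp h₁ 2 volume) (hL2 : MemLp h₂ 2 volume)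
    (hbl1 : ∃ H : ℝ → ℂ, Integrable H ∧ (∀ ξ : ℝ, (1:ℝ)/2 < |ξ| → H ξ = 0) ∧
      ∀ x, h₁ x = 𝓕⁻ H x)
    (hbl2 : ∃ H : ℝ → ℂ, Integrable H ∧ (∀ ξ : ℝ, (1:ℝ)/2 < |ξ| → H ξ = 0) ∧
      ∀ x, h₂ x = 𝓕⁻ H x)
    (hne : h₁ ≠ h₂ ∧ h₁ ≠ -h₂)
    (s : ℝ) (hs0 : 0 < s) (hs1 : s < 1)
    (hsamp : ∀ k : ℤ, ‖h₁ ((k : ℝ) / (2 * s))‖ = ‖h₂ ((k : ℝ) / (2 * s))‖)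
    (f : Ed d → ℂ) (hf0 : f ≠ 0) (hfi : Integrable f) (hfL : MemLp f 2 volume)
    (hfbl : ∃ F : Ed d → ℂ, Integrable F ∧
      (∀ ξ : Ed d, (∃ j, (1:ℝ)/2 < |ξ j|) → F ξ = 0) ∧ ∀ x, f x = 𝓕⁻ F x) :
    let g₁ : Ed (d + 1) → ℂ := fun x =>
      f ((WithLp.equiv 2 (Fin d → ℝ)).symm fun k => x (i.succAbove k)) * h₁ (x i)
    let g₂ : Ed (d + 1) → ℂ := fun x =>
      f ((WithLp.equiv 2 (Fin d → ℝ)).symm fun k => x (i.succAbove k)) * h₂ (x i)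
    let s' : Fin (d + 1) → ℝ := fun j => if j = i then s else 1
    (∀ ξ : Ed (d + 1), (∃ j, (1:ℝ)/2 < |ξ j|) → 𝓕 g₁ ξ = 0) ∧
    (∀ ξ : Ed (d + 1), (∃ j, (1:ℝ)/2 < |ξ j|) → 𝓕 g₂ ξ = 0) ∧
    (∀ n : Fin (d + 1) → ℤ,
      ‖g₁ (latticePt (d + 1) s' n)‖ = ‖g₂ (latticePt (d + 1) s' n)‖) ∧
    g₁ ≠ g₂ ∧ g₁ ≠ -g₂ := by
  intro g₁ g₂ s'
  obtain ⟨F, hFi, hF0, hFrep⟩ := hfbl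
  -- key vanishing argument, uniform in h
  have main : ∀ h : ℝ → ℂ, Integrable h →
      (∃ H : ℝ → ℂ, Integrable H ∧ (∀ ξ : ℝ, (1:ℝ)/2 < |ξ| → H ξ = 0) ∧ ∀ x, h x = 𝓕⁻ H x) →
      ∀ ξ : Ed (d + 1), (∃ j, (1:ℝ)/2 < |ξ j|) →
      𝓕 (fun x : Ed (d + 1) =>
        f ((WithLp.equiv 2 (Fin d → ℝ)).symm fun k => x (i.succAbove k)) * h (x i)) ξ = 0 := by
    rintro h hInt ⟨H, hHi, hH0, hHrep⟩ ξ ⟨j, hj⟩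
    rw [fourier_factor]
    by_cases hji : j = i
    · rw [hji] at hj
      have : 𝓕 h (ξ i) = 0 := by
        refine bandlimit_fourier_zero h H hHi hInt hHrep
          (U := {x : ℝ | (1:ℝ)/2 < |x|}) (isOpen_lt continuous_const continuous_abs)
          (fun x hx => hH0 x hx) hj
      rw [this, zero_mul]
    · obtain ⟨k, hk⟩ := Fin.exists_succAbove_eq hji
      have : 𝓕 f ((WithLp.equiv 2 (Fin d → ℝ)).symm fun k => ξ (i.succAbove k)) = 0 := by
        refine bandlimit_fourier_zero f F hFi hfi hFrep
          (U := {η : Ed d | (1:ℝ)/2 < |η k|})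
          (isOpen_lt continuous_const (continuous_abs.comp (cont_eval k)))
          (fun η hη => hF0 η ⟨k, hη⟩) ?_
        show (1:ℝ)/2 < |((WithLp.equiv 2 (Fin d → ℝ)).symm fun k => ξ (i.succAbove k) : Ed d) k|
        rw [WithLp.equiv_symm_apply, PiLp.toLp_apply, hk]
        exact hj
      rw [this, mul_zero]
  refine ⟨main h₁ hi1 hbl1, main h₂ hi2 hbl2, ?_, ?_, ?_⟩
  · intro n
    have hpi : latticePt (d + 1) s' n i = (n i : ℝ) / (2 * s) := by
      show ((WithLp.equiv 2 (Fin (d+1) → ℝ)).symm fun j => (n j : ℝ) / (2 * s' j) : Ed (d+1)) i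
          = (n i : ℝ) / (2 * s)
      rw [WithLp.equiv_symm_apply, PiLp.toLp_apply]
      simp [s']
    show ‖_ * h₁ _‖ = ‖_ * h₂ _‖
    rw [norm_mul, norm_mul, hpi, hsamp (n i)]
  · -- g₁ ≠ g₂
    intro hgg
    apply hne.1
    obtain ⟨y₀, hy₀⟩ := Function.ne_iff.mp hf0
    funext t
    have key := congrFun hgg
      ((WithLp.equiv 2 (Fin (d+1) → ℝ)).symm (i.insertNth t (WithLp.equiv 2 (Fin d → ℝ) y₀)))
    simp only [g₁, g₂] at key
    have hxi : ((WithLp.equiv 2 (Fin (d+1) → ℝ)).symm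
        (i.insertNth t (WithLp.equiv 2 (Fin d → ℝ) y₀)) : Ed (d+1)) i = t := by
      rw [WithLp.equiv_symm_apply, PiLp.toLp_apply, Fin.insertNth_apply_same]
    have hxk : ((WithLp.equiv 2 (Fin d → ℝ)).symm fun k =>
        ((WithLp.equiv 2 (Fin (d+1) → ℝ)).symm
          (i.insertNth t (WithLp.equiv 2 (Fin d → ℝ) y₀)) : Ed (d+1)) (i.succAbove k) : Ed d)
        = y₀ := by
      ext k
      rw [WithLp.equiv_symm_apply, WithLp.equiv_symm_apply, PiLp.toLp_apply, PiLp.toLp_apply,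
        Fin.insertNth_apply_succAbove]
      rfl
    rw [hxi, hxk] at key
    exact mul_left_cancel₀ (by simpa using hy₀) key
  · -- g₁ ≠ -g₂
    intro hgg
    apply hne.2
    obtain ⟨y₀, hy₀⟩ := Function.ne_iff.mp hf0
    funext t
    have key := congrFun hgg
      ((WithLp.equiv 2 (Fin (d+1) → ℝ)).symm (i.insertNth t (WithLp.equiv 2 (Fin d → ℝ) y₀)))
    simp only [g₁, g₂, Pi.neg_apply] at key
    have hxi : ((WithLp.equiv 2 (Fin (d+1) → ℝ)).symm
        (i.insertNth t (WithLp.equiv 2 (Fin d → ℝ) y₀)) : Ed (d+1)) i = t := by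
      rw [WithLp.equiv_symm_apply, PiLp.toLp_apply, Fin.insertNth_apply_same]
    have hxk : ((WithLp.equiv 2 (Fin d → ℝ)).symm fun k =>
        ((WithLp.equiv 2 (Fin (d+1) → ℝ)).symm
          (i.insertNth t (WithLp.equiv 2 (Fin d → ℝ) y₀)) : Ed (d+1)) (i.succAbove k) : Ed d)
        = y₀ := by
      ext k
      rw [WithLp.equiv_symm_apply, WithLp.equiv_symm_apply, PiLp.toLp_apply, PiLp.toLp_apply,
        Fin.insertNth_apply_succAbove]
      rfl
    rw [hxi, hxk] at key
    rw [← mul_neg] at key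
    rw [Pi.neg_apply]
    exact mul_left_cancel₀ (by simpa using hy₀) key
end
end
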